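/- arXiv:1912.12343 — 5 statements merged into one kernel-verified Lean document; each statement's English description precedes it below -/
import Mathlib

section
/- For every n ≥ 1 and every weak composition k ∈ Comp(n,n), the number of column-restricted parking functions of size n with column heights k equals the asymmetric multinomial coefficient: |CPF(n,k)| = ⟨⟨n;k⟩⟩. -/
open Finset

/-- The operation k ↦ k̃_j (0-based index `j`): decrease the `j`-th entry by 1,
then delete the leftmost zero entry of the resulting tuple. -/
def ktilde (k : List ℕ) (j : ℕ) : List ℕ :=
  (k.set j (k.getD j 0 - 1)).erase 0

/-- The asymmetric multinomial coefficient ⟨⟨n;k⟩⟩, defined by ⟨⟨1;(1)⟩⟩ = 1 and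
⟨⟨n;k⟩⟩ = Σ_{j=1}^{i_k-1} ⟨⟨n-1;k̃_j⟩⟩, where i_k is the (1-based) position of the
leftmost zero of k (i_k = n+1 if there is no zero), so that the sum has
`k.indexOf 0` terms (0-based j). -/
def amc : ℕ → List ℕ → ℕ
  | 0, _ => 0
  | 1, k => if k = [1] then 1 else 0
  | n + 2, k => ∑ j ∈ Finset.range (k.idxOf 0), amc (n + 1) (ktilde k j)

/-- `f : Fin n → Fin n` (0-based labels and columns) is a parking function:
for every `i ≤ n` at least `i` labels lie in the first `i` columns. -/
def IsParking (n : ℕ) (f : Fin n → Fin n) : Prop :=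
  ∀ i : ℕ, i ≤ n → i ≤ (univ.filter fun a => (f a : ℕ) < i).card

/-- The dominance index of the label `a`: the number of columns strictly to the left of
`a`'s column containing no label greater than `a`. -/
def domIndex {n : ℕ} (f : Fin n → Fin n) (a : Fin n) : ℕ :=
  (univ.filter fun c : Fin n => c < f a ∧ ∀ b, f b = c → b < a).card

/-- Column-restricted parking function: every (1-based) label `a+1` satisfies
`d_f(a) < a+1`. -/
def IsCPF (n : ℕ) (f : Fin n → Fin n) : Prop :=
  IsParking n f ∧ ∀ a : Fin n, domIndex f a < (a : ℕ) + 1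

/-- The list of column heights of `f`. -/
def colHeights {n : ℕ} (f : Fin n → Fin n) : List ℕ :=
  List.ofFn fun c : Fin n => (univ.filter fun a => f a = c).card

/-- The number of column-restricted parking functions of size `n`. -/
noncomputable def cpfCount (n : ℕ) : ℕ := Nat.card {f : Fin n → Fin n // IsCPF n f}

/-- The number of column-restricted parking functions of size `n` with column heights `k`. -/
noncomputable def cpfCountWith (n : ℕ) (k : List ℕ) : ℕ :=
  Nat.card {f : Fin n → Fin n // IsCPF n f ∧ colHeights f = k}

/-- A composition `k` of `n` of length `n` is Catalan if `k_1 + ⋯ + k_j ≥ j` for all `j < n`. -/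
def IsCatalan (n : ℕ) (k : List ℕ) : Prop :=
  ∀ j < n, j ≤ (k.take j).sum


/-- relabeling helpers -/
def grow (z c : ℕ) : ℕ := if c < z then c else c + 1
def shrink (z c : ℕ) : ℕ := if c < z then c else c - 1

lemma shrink_grow (z c : ℕ) : shrink z (grow z c) = c := by
  simp only [grow, shrink]; split_ifs <;> omega

lemma grow_shrink {z c : ℕ} (h : c ≠ z) : grow z (shrink z c) = c := by
  simp only [grow, shrink]; split_ifs <;> omega

lemma grow_ne (z c : ℕ) : grow z c ≠ z := by simp only [grow]; split_ifs <;> omega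

lemma grow_lt_grow_iff {z c d : ℕ} : grow z c < grow z d ↔ c < d := by
  simp only [grow]; split_ifs <;> omega

-- order iso: grow z c < C ↔ c < shrink z C, for C ≠ z
lemma grow_lt_iff {z c C : ℕ} (hC : C ≠ z) : grow z c < C ↔ c < shrink z C := by
  simp only [grow, shrink]; split_ifs <;> omega

lemma indexOf_le_of_getElem {l : List ℕ} {a : ℕ} {i : ℕ} (h : i < l.length)
    (ha : l[i] = a) : l.idxOf a ≤ i := by
  induction l generalizing i with
  | nil => simp at h
  | cons b t ih =>
    cases i with
    | zero => simp at ha; simp [ha, List.idxOf_cons_self]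
    | succ i =>
      by_cases hb : b = a
      · simp [List.idxOf_cons_eq _ hb]
      · rw [List.idxOf_cons_ne _ hb]
        have := ih (by simpa using h) (by simpa using ha)
        omega

lemma getElem_ne_of_lt_indexOf {l : List ℕ} {a : ℕ} {i : ℕ} (h : i < l.length)
    (hi : i < l.idxOf a) : l[i] ≠ a := fun ha => absurd (indexOf_le_of_getElem h ha) (by omega)

lemma sum_set_add (l : List ℕ) (i v : ℕ) (h : i < l.length) :
    (l.set i v).sum + l[i] = l.sum + v := by
  induction l generalizing i with
  | nil => simp at h
  | cons b t ih =>
    cases i with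
    | zero => simp [List.set]; omega
    | succ i =>
      simp only [List.set, List.sum_cons, List.getElem_cons_succ]
      have := ih i (by simpa using h)
      omega

lemma zero_mem_of_sum_lt (l : List ℕ) (h : l.sum < l.length) : 0 ∈ l := by
  by_contra h0
  have : ∀ x ∈ l, 1 ≤ x := fun x hx => Nat.one_le_iff_ne_zero.2 (fun e => h0 (e ▸ hx))
  exact absurd (List.length_le_sum_of_one_le l this) (by omega)

-- ==== Fin-level helpers ====

def growF (m z : ℕ) (c : Fin (m+1)) : Fin (m+2) := ⟨grow z c, by simp only [grow]; split_ifs <;> omega⟩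
def shrinkF (m z : ℕ) (c : Fin (m+2)) : Fin (m+1) := ⟨min (shrink z c) m, by omega⟩

lemma shrinkF_val {m z : ℕ} (hz : z ≤ m+1) (c : Fin (m+2)) :
    (shrinkF m z c : ℕ) = shrink z (c : ℕ) := by
  have := c.isLt
  simp only [shrinkF, shrink]; split_ifs <;> omega

lemma card_filter_fin_succ {N : ℕ} (p : Fin (N+1) → Prop) [DecidablePred p] :
    (univ.filter p).card = (if p 0 then 1 else 0) + (univ.filter fun a : Fin N => p a.succ).card := by
  rw [Finset.card_filter, Finset.card_filter, Fin.sum_univ_succ]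

lemma card_filter_lt_eq_sum {N I : ℕ} (f : Fin N → Fin N) :
    (univ.filter fun a => (f a : ℕ) < I).card
      = ∑ c ∈ Finset.range I, (univ.filter fun a => (f a : ℕ) = c).card := by
  rw [Finset.card_eq_sum_card_fiberwise (f := fun a => (f a : ℕ)) (t := Finset.range I)
      (fun x hx => by simpa using (mem_filter.1 hx).2)]
  refine Finset.sum_congr rfl fun c hc => ?_
  rw [mem_range] at hc
  congr 1
  ext a
  simp only [mem_filter, mem_univ, true_and]
  exact ⟨fun h => h.2, fun h => ⟨by omega, h⟩⟩

lemma colHeights_length {N : ℕ} (f : Fin N → Fin N) : (colHeights f).length = N := by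
  simp [colHeights]

lemma colHeights_getElem {N : ℕ} (f : Fin N → Fin N) (c : ℕ) (hc : c < N) :
    (colHeights f)[c]'(by simp [colHeights_length, hc])
      = (univ.filter fun a => (f a : ℕ) = c).card := by
  simp only [colHeights, List.getElem_ofFn]
  congr 1
  ext a
  simp [Fin.ext_iff]


-- ==== decidability ====

instance (n : ℕ) (f : Fin n → Fin n) : Decidable (IsParking n f) := by
  unfold IsParking; infer_instance

instance (n : ℕ) (f : Fin n → Fin n) : Decidable (IsCPF n f) := by
  unfold IsCPF; infer_instance

-- ==== the modified composition k' and the deleted column z ====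

def kset (k : List ℕ) (j : ℕ) : List ℕ := k.set j (k.getD j 0 - 1)
def zidx (k : List ℕ) (j : ℕ) : ℕ := (kset k j).idxOf 0

lemma kj_len {n j : ℕ} {k : List ℕ} (hlen : k.length = n + 2) (hj : j < k.idxOf 0) :
    j < n + 2 := by
  have := List.idxOf_le_length (a := 0) (l := k); omega

lemma kj_pos {n j : ℕ} {k : List ℕ} (hlen : k.length = n + 2) (hj : j < k.idxOf 0) :
    1 ≤ k.getD j 0 := by
  have hjl : j < k.length := by have := kj_len hlen hj; omega
  rw [List.getD_eq_getElem _ _ hjl]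
  have := getElem_ne_of_lt_indexOf hjl hj
  omega

lemma kset_length {n j : ℕ} {k : List ℕ} (hlen : k.length = n + 2) :
    (kset k j).length = n + 2 := by simp [kset, hlen]

lemma kset_sum {n j : ℕ} {k : List ℕ} (hlen : k.length = n + 2) (hsum : k.sum = n + 2)
    (hj : j < k.idxOf 0) : (kset k j).sum = n + 1 := by
  have hjl : j < k.length := by have := kj_len hlen hj; omega
  have h1 := sum_set_add k j (k.getD j 0 - 1) hjl
  have h2 := kj_pos hlen hj
  have h3 : k[j] = k.getD j 0 := (List.getD_eq_getElem _ _ hjl).symm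
  unfold kset
  omega

lemma zero_mem_kset {n j : ℕ} {k : List ℕ} (hlen : k.length = n + 2) (hsum : k.sum = n + 2)
    (hj : j < k.idxOf 0) : 0 ∈ kset k j := by
  apply zero_mem_of_sum_lt
  rw [kset_sum hlen hsum hj, kset_length hlen]
  omega

lemma zidx_lt {n j : ℕ} {k : List ℕ} (hlen : k.length = n + 2) (hsum : k.sum = n + 2)
    (hj : j < k.idxOf 0) : zidx k j < n + 2 := by
  have := List.idxOf_lt_length_iff.2 (zero_mem_kset hlen hsum hj)
  rw [kset_length hlen] at this
  exact this

lemma kset_getD_z {n j : ℕ} {k : List ℕ} (hlen : k.length = n + 2) (hsum : k.sum = n + 2)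
    (hj : j < k.idxOf 0) : (kset k j).getD (zidx k j) 0 = 0 := by
  have hz : zidx k j < (kset k j).length := by rw [kset_length hlen]; exact zidx_lt hlen hsum hj
  rw [List.getD_eq_getElem _ _ hz]
  exact List.getElem_idxOf hz

lemma kset_getD {n j : ℕ} {k : List ℕ} (hlen : k.length = n + 2) (hj : j < k.idxOf 0)
    (c : ℕ) (hc : c < n + 2) :
    (kset k j).getD c 0 = if j = c then k.getD j 0 - 1 else k.getD c 0 := by
  have hcl : c < k.length := by omega
  have hcl' : c < (kset k j).length := by rw [kset_length hlen]; omega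
  unfold kset
  rw [List.getD_eq_getElem _ _ (by simpa [kset] using hcl'), List.getElem_set]
  split
  · rfl
  · rw [List.getD_eq_getElem _ _ hcl]

lemma k_getD_split {n j : ℕ} {k : List ℕ} (hlen : k.length = n + 2) (hj : j < k.idxOf 0)
    (c : ℕ) (hc : c < n + 2) :
    k.getD c 0 = (if j = c then 1 else 0) + (kset k j).getD c 0 := by
  have h2 := kj_pos hlen hj
  rw [kset_getD hlen hj c hc]
  split
  · next h => subst h; omega
  · omega

lemma j_le_zidx {n j : ℕ} {k : List ℕ} (hlen : k.length = n + 2) (hsum : k.sum = n + 2)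
    (hj : j < k.idxOf 0) : j ≤ zidx k j := by
  by_contra h
  push_neg at h
  have hjn := kj_len hlen hj
  have hz2 : zidx k j < n + 2 := by omega
  have h1 := kset_getD hlen hj (zidx k j) hz2
  have h2 := kset_getD_z hlen hsum hj
  have hzl : zidx k j < k.length := by omega
  have h3 := getElem_ne_of_lt_indexOf hzl (by omega : zidx k j < k.idxOf 0)
  rw [h1] at h2
  rw [if_neg (by omega)] at h2
  rw [List.getD_eq_getElem _ _ hzl] at h2
  exact h3 h2

lemma kset_pos {n j : ℕ} {k : List ℕ} (hlen : k.length = n + 2) (hsum : k.sum = n + 2)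
    (hj : j < k.idxOf 0) (c : ℕ) (hc : c < zidx k j) : 1 ≤ (kset k j).getD c 0 := by
  have hz := zidx_lt hlen hsum hj
  have hcl : c < (kset k j).length := by rw [kset_length hlen]; omega
  rw [List.getD_eq_getElem _ _ hcl]
  have := getElem_ne_of_lt_indexOf hcl (hc : c < zidx k j)
  omega

lemma ktilde_eq {k : List ℕ} {j : ℕ} : ktilde k j = (kset k j).eraseIdx (zidx k j) := by
  simp only [ktilde, kset, zidx]; exact List.erase_eq_eraseIdx_of_idxOf rfl

lemma ktilde_length {n j : ℕ} {k : List ℕ} (hlen : k.length = n + 2) (hsum : k.sum = n + 2)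
    (hj : j < k.idxOf 0) : (ktilde k j).length = n + 1 := by
  unfold ktilde
  rw [List.length_erase_of_mem (by simpa [kset] using zero_mem_kset hlen hsum hj)]
  have : (k.set j (k.getD j 0 - 1)).length = n + 2 := by simp [hlen]
  omega

lemma ktilde_sum {n j : ℕ} {k : List ℕ} (hlen : k.length = n + 2) (hsum : k.sum = n + 2)
    (hj : j < k.idxOf 0) : (ktilde k j).sum = n + 1 := by
  have h := List.sum_erase (zero_mem_kset hlen hsum hj)
  have h2 := kset_sum hlen hsum hj
  have h3 : ktilde k j = (kset k j).erase 0 := rfl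
  rw [h3]
  omega

lemma ktilde_getD {n j : ℕ} {k : List ℕ} (hlen : k.length = n + 2) (hsum : k.sum = n + 2)
    (hj : j < k.idxOf 0) (c : ℕ) (hc : c < n + 1) :
    (ktilde k j).getD c 0 = (kset k j).getD (grow (zidx k j) c) 0 := by
  have hz := zidx_lt hlen hsum hj
  have hktl := ktilde_length hlen hsum hj
  have hcl : c < (ktilde k j).length := by omega
  have hcl2 : c < ((kset k j).eraseIdx (zidx k j)).length := by rw [← ktilde_eq]; omega
  rw [List.getD_eq_getElem _ _ hcl]
  have hg := List.getElem_eraseIdx hcl2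
  have hge : (ktilde k j)[c]'hcl = ((kset k j).eraseIdx (zidx k j))[c]'hcl2 := by
    congr 1 <;> rw [ktilde_eq]
  rw [hge, hg]
  unfold grow
  rcases lt_or_ge c (zidx k j) with h | h
  · rw [dif_pos h, if_pos h, List.getD_eq_getElem _ _ (by rw [kset_length hlen]; omega)]
  · rw [dif_neg (by omega)]
    have hgrow : (if c < zidx k j then c else c + 1) = c + 1 := if_neg (by omega)
    rw [hgrow, List.getD_eq_getElem _ _ (by rw [kset_length hlen]; omega)]


-- ==== more arithmetic iffs ====

lemma shrink_eq_iff {z x c : ℕ} (hx : x ≠ z) : shrink z x = c ↔ x = grow z c := by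
  simp only [grow, shrink]; split_ifs <;> omega

lemma grow_eq_iff {z x C : ℕ} (hC : C ≠ z) : grow z x = C ↔ x = shrink z C := by
  simp only [grow, shrink]; split_ifs <;> omega

lemma shrink_lt_iff {z x i : ℕ} (hx : x ≠ z) :
    shrink z x < i ↔ x < (if i ≤ z then i else i + 1) := by
  simp only [shrink]; split_ifs <;> omega

lemma grow_lt_iff' {z x i : ℕ} : grow z x < i ↔ x < (if i ≤ z then i else i - 1) := by
  simp only [grow]; split_ifs <;> omega

lemma lt_grow_iff {z x C : ℕ} (hC : C ≠ z) : C < grow z x ↔ shrink z C < x := by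
  simp only [grow, shrink]; split_ifs <;> omega

-- ==== the down and up maps ====

def downMap (m z : ℕ) (f : Fin (m + 2) → Fin (m + 2)) (a : Fin (m + 1)) : Fin (m + 1) :=
  shrinkF m z (f a.succ)

def upMap (m z j : ℕ) (g : Fin (m + 1) → Fin (m + 1)) (a : Fin (m + 2)) : Fin (m + 2) :=
  if h : a = 0 then ⟨min j (m + 1), by omega⟩ else growF m z (g (a.pred h))

lemma downMap_val {m z : ℕ} (hz : z ≤ m + 1) (f : Fin (m + 2) → Fin (m + 2)) (a : Fin (m + 1)) :
    (downMap m z f a : ℕ) = shrink z (f a.succ : ℕ) := shrinkF_val hz _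

lemma upMap_zero {m z j : ℕ} (hj : j ≤ m + 1) (g : Fin (m + 1) → Fin (m + 1)) :
    (upMap m z j g 0 : ℕ) = j := by
  simp [upMap]; omega

lemma upMap_succ {m z j : ℕ} (g : Fin (m + 1) → Fin (m + 1)) (a : Fin (m + 1)) :
    upMap m z j g a.succ = growF m z (g a) := by
  rw [upMap, dif_neg (Fin.succ_ne_zero a), Fin.pred_succ]

lemma growF_val {m z : ℕ} (c : Fin (m + 1)) : (growF m z c : ℕ) = grow z (c : ℕ) := rfl

-- ==== counting lemmas for a fixed f ====

lemma heights_cnt {N : ℕ} {f : Fin N → Fin N} {k : List ℕ} (hk : colHeights f = k)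
    (c : ℕ) (hc : c < N) :
    (univ.filter fun a => (f a : ℕ) = c).card = k.getD c 0 := by
  subst hk
  rw [List.getD_eq_getElem _ _ (by rw [colHeights_length]; exact hc),
    colHeights_getElem f c hc]

lemma cnt1_eq {n j : ℕ} {k : List ℕ} (hlen : k.length = n + 2) (hj : j < k.idxOf 0)
    {f : Fin (n + 2) → Fin (n + 2)} (hcol : colHeights f = k) (hf0 : (f 0 : ℕ) = j)
    (c : ℕ) (hc : c < n + 2) :
    (univ.filter fun a : Fin (n + 1) => (f a.succ : ℕ) = c).card = (kset k j).getD c 0 := by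
  have h1 := heights_cnt hcol c hc
  have h2 := card_filter_fin_succ (fun a : Fin (n + 2) => (f a : ℕ) = c)
  have h3 := k_getD_split hlen hj c hc
  rw [hf0] at h2
  by_cases hjc : j = c
  · rw [if_pos hjc] at h2 h3; omega
  · rw [if_neg hjc] at h2 h3; omega

lemma avoid_z {n j : ℕ} {k : List ℕ} (hlen : k.length = n + 2) (hsum : k.sum = n + 2)
    (hj : j < k.idxOf 0) {f : Fin (n + 2) → Fin (n + 2)} (hcol : colHeights f = k)
    (hf0 : (f 0 : ℕ) = j) (a : Fin (n + 1)) : (f a.succ : ℕ) ≠ zidx k j := by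
  intro ha
  have h := cnt1_eq hlen hj hcol hf0 (zidx k j) (zidx_lt hlen hsum hj)
  rw [kset_getD_z hlen hsum hj, Finset.card_eq_zero] at h
  have : a ∈ (univ.filter fun a : Fin (n + 1) => (f a.succ : ℕ) = zidx k j) :=
    mem_filter.2 ⟨mem_univ _, ha⟩
  rw [h] at this
  exact absurd this (notMem_empty a)


-- ==== generalized prefix-count ====

lemma card_filter_lt_eq_sum' {α : Type*} [Fintype α] [DecidableEq α] (F : α → ℕ) (I : ℕ) :
    (univ.filter fun a => F a < I).card = ∑ c ∈ Finset.range I, (univ.filter fun a => F a = c).card := by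
  rw [Finset.card_eq_sum_card_fiberwise (f := F) (t := Finset.range I)
      (fun x hx => by simpa using (mem_filter.1 hx).2)]
  refine Finset.sum_congr rfl fun c hc => ?_
  rw [mem_range] at hc
  congr 1
  ext a
  simp only [mem_filter, mem_univ, true_and]
  exact ⟨fun h => h.2, fun h => ⟨by omega, h⟩⟩

-- ==== forward: the down map preserves the CPF structure ====

lemma down_heights {n j : ℕ} {k : List ℕ} (hlen : k.length = n + 2) (hsum : k.sum = n + 2)
    (hj : j < k.idxOf 0) {f : Fin (n + 2) → Fin (n + 2)} (hcol : colHeights f = k)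
    (hf0 : (f 0 : ℕ) = j) :
    colHeights (downMap n (zidx k j) f) = ktilde k j := by
  have hz := zidx_lt hlen hsum hj
  have hz' : zidx k j ≤ n + 1 := by omega
  apply List.ext_getElem
  · rw [colHeights_length, ktilde_length hlen hsum hj]
  intro c h1 h2
  have hc : c < n + 1 := by rw [colHeights_length] at h1; exact h1
  rw [colHeights_getElem _ c hc]
  calc (univ.filter fun a => (downMap n (zidx k j) f a : ℕ) = c).card
      = (univ.filter fun a : Fin (n + 1) => (f a.succ : ℕ) = grow (zidx k j) c).card := by
        congr 1
        ext a
        simp only [mem_filter, mem_univ, true_and]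
        rw [downMap_val hz' f a, shrink_eq_iff (avoid_z hlen hsum hj hcol hf0 a)]
    _ = (kset k j).getD (grow (zidx k j) c) 0 :=
        cnt1_eq hlen hj hcol hf0 _ (by simp only [grow]; split_ifs <;> omega)
    _ = (ktilde k j).getD c 0 := (ktilde_getD hlen hsum hj c hc).symm
    _ = (ktilde k j)[c] :=
        List.getD_eq_getElem _ _ (by rw [ktilde_length hlen hsum hj]; omega)

lemma down_parking {n j : ℕ} {k : List ℕ} (hlen : k.length = n + 2) (hsum : k.sum = n + 2)
    (hj : j < k.idxOf 0) {f : Fin (n + 2) → Fin (n + 2)} (hpark : IsParking (n + 2) f)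
    (hcol : colHeights f = k) (hf0 : (f 0 : ℕ) = j) :
    IsParking (n + 1) (downMap n (zidx k j) f) := by
  intro i hi
  have hz := zidx_lt hlen hsum hj
  have hjz := j_le_zidx hlen hsum hj
  have hz' : zidx k j ≤ n + 1 := by omega
  have havoid := avoid_z hlen hsum hj hcol hf0
  by_cases hiz : i ≤ zidx k j
  · have hcardeq : (univ.filter fun a : Fin (n + 1) => (downMap n (zidx k j) f a : ℕ) < i).card
        = (univ.filter fun a : Fin (n + 1) => (f a.succ : ℕ) < i).card := by
      congr 1
      ext a
      simp only [mem_filter, mem_univ, true_and]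
      rw [downMap_val hz' f a, shrink_lt_iff (havoid a), if_pos hiz]
    rw [hcardeq, card_filter_lt_eq_sum' (fun a : Fin (n + 1) => (f a.succ : ℕ)) i]
    have hterm : ∀ c ∈ Finset.range i,
        1 ≤ (univ.filter fun a : Fin (n + 1) => (f a.succ : ℕ) = c).card := by
      intro c hc
      rw [mem_range] at hc
      rw [cnt1_eq hlen hj hcol hf0 c (by omega)]
      exact kset_pos hlen hsum hj c (by omega)
    calc i = ∑ _c ∈ Finset.range i, 1 := by simp
      _ ≤ _ := Finset.sum_le_sum hterm
  · have hcardeq : (univ.filter fun a : Fin (n + 1) => (downMap n (zidx k j) f a : ℕ) < i).card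
        = (univ.filter fun a : Fin (n + 1) => (f a.succ : ℕ) < i + 1).card := by
      congr 1
      ext a
      simp only [mem_filter, mem_univ, true_and]
      rw [downMap_val hz' f a, shrink_lt_iff (havoid a), if_neg hiz]
    have hsplit := card_filter_fin_succ (fun a : Fin (n + 2) => (f a : ℕ) < i + 1)
    rw [hf0, if_pos (by omega : j < i + 1)] at hsplit
    have hp := hpark (i + 1) (by omega)
    rw [hcardeq]
    omega

lemma fin_card_lt {N : ℕ} (a : Fin N) :
    (univ.filter fun b : Fin N => b < a).card = (a : ℕ) := by
  have : (univ.filter fun b : Fin N => b < a) = Finset.Iio a := by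
    ext b; simp
  rw [this, Fin.card_Iio]

lemma down_dom {n j : ℕ} {k : List ℕ} (hlen : k.length = n + 2) (hsum : k.sum = n + 2)
    (hj : j < k.idxOf 0) {f : Fin (n + 2) → Fin (n + 2)} (hcpf : IsCPF (n + 2) f)
    (hcol : colHeights f = k) (hf0 : (f 0 : ℕ) = j) (a : Fin (n + 1)) :
    domIndex (downMap n (zidx k j) f) a < (a : ℕ) + 1 := by
  have hz := zidx_lt hlen hsum hj
  have hz' : zidx k j ≤ n + 1 := by omega
  have hjz := j_le_zidx hlen hsum hj
  have havoid := avoid_z hlen hsum hj hcol hf0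
  have hdh := down_heights hlen hsum hj hcol hf0
  set z := zidx k j with hzdef
  set g := downMap n z f with hgdef
  have hgval : ∀ b : Fin (n + 1), (g b : ℕ) = shrink z (f b.succ : ℕ) := downMap_val hz' f
  have hdA := hcpf.2 a.succ
  rcases lt_trichotomy z ((f a.succ : ℕ)) with hlt | heq | hgt
  · -- z < f a.succ : the counted columns of g plus z inject into those of f
    have hsub : insert (⟨z, by omega⟩ : Fin (n + 2))
        ((univ.filter fun c : Fin (n + 1) => c < g a ∧ ∀ b, g b = c → b < a).image (growF n z))
        ⊆ (univ.filter fun C : Fin (n + 2) => C < f a.succ ∧ ∀ b, f b = C → b < a.succ) := by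
      intro C hC
      rw [mem_insert] at hC
      rcases hC with rfl | hC
      · refine mem_filter.2 ⟨mem_univ _, Fin.lt_def.2 hlt, fun b hb => ?_⟩
        rcases Fin.eq_zero_or_eq_succ b with rfl | ⟨b', rfl⟩
        · exact Fin.succ_pos a
        · exact absurd (congrArg Fin.val hb) (havoid b')
      · obtain ⟨c, hc, rfl⟩ := Finset.mem_image.1 hC
        rw [mem_filter] at hc
        obtain ⟨-, hc1, hc2⟩ := hc
        refine mem_filter.2 ⟨mem_univ _, ?_, fun b hb => ?_⟩
        · rw [Fin.lt_def, growF_val, grow_lt_iff (havoid a), ← hgval a]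
          exact Fin.lt_def.1 hc1
        · rcases Fin.eq_zero_or_eq_succ b with rfl | ⟨b', rfl⟩
          · exact Fin.succ_pos a
          · have hgb : g b' = c := by
              apply Fin.ext
              rw [hgval b', congrArg Fin.val hb, growF_val, shrink_grow]
            exact Fin.succ_lt_succ_iff.2 (hc2 b' hgb)
    have hinj : Function.Injective (growF n z) := by
      intro x y hxy
      have := congrArg Fin.val hxy
      rw [growF_val, growF_val] at this
      apply Fin.ext
      simp only [grow] at this
      split_ifs at this <;> omega
    have hcards := Finset.card_le_card hsub
    rw [Finset.card_insert_of_notMem, Finset.card_image_of_injective _ hinj] at hcards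
    · unfold domIndex at hdA ⊢
      have : (a.succ : ℕ) = (a : ℕ) + 1 := rfl
      omega
    · intro hmem
      obtain ⟨c, -, hcval⟩ := Finset.mem_image.1 hmem
      exact grow_ne z c (congrArg Fin.val hcval)
  · exact absurd heq.symm (havoid a)
  · -- f a.succ < z : the counted columns of g are all nonempty, hence ≤ a of them
    have hsub : (univ.filter fun c : Fin (n + 1) => c < g a ∧ ∀ b, g b = c → b < a)
        ⊆ (univ.filter fun b : Fin (n + 1) => b < a).image g := by
      intro c hc
      rw [mem_filter] at hc
      obtain ⟨-, hc1, hc2⟩ := hc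
      have hga : (g a : ℕ) = (f a.succ : ℕ) := by
        rw [hgval a]; simp only [shrink]; rw [if_pos hgt]
      have hcz : (c : ℕ) < z := by
        have := Fin.lt_def.1 hc1
        omega
      have hcnt : 1 ≤ (univ.filter fun b : Fin (n + 1) => g b = c).card := by
        have h1 := heights_cnt hdh (c : ℕ) c.isLt
        rw [ktilde_getD hlen hsum hj (c : ℕ) c.isLt] at h1
        have hgrc : grow z (c : ℕ) = (c : ℕ) := by simp only [grow]; rw [if_pos hcz]
        rw [hgrc] at h1
        have h2 := kset_pos hlen hsum hj (c : ℕ) hcz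
        have h3 : (univ.filter fun b : Fin (n + 1) => g b = c)
            = (univ.filter fun b : Fin (n + 1) => ((g b : ℕ) = (c : ℕ))) := by
          ext b; simp [Fin.ext_iff]
        rw [h3, h1]
        exact h2
      obtain ⟨b, hb⟩ := Finset.card_pos.1 hcnt
      rw [mem_filter] at hb
      exact Finset.mem_image.2 ⟨b, mem_filter.2 ⟨mem_univ _, hc2 b hb.2⟩, hb.2⟩
    have h1 := Finset.card_le_card hsub
    have h2 := Finset.card_image_le
      (s := univ.filter fun b : Fin (n + 1) => b < a) (f := g)
    have h3 := fin_card_lt a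
    unfold domIndex
    omega


-- ==== backward: the up map ====

lemma up_heights {n j : ℕ} {k : List ℕ} (hlen : k.length = n + 2) (hsum : k.sum = n + 2)
    (hj : j < k.idxOf 0) {g : Fin (n + 1) → Fin (n + 1)} (hgcol : colHeights g = ktilde k j) :
    colHeights (upMap n (zidx k j) j g) = k := by
  have hz := zidx_lt hlen hsum hj
  have hz' : zidx k j ≤ n + 1 := by omega
  have hjz := j_le_zidx hlen hsum hj
  apply List.ext_getElem
  · rw [colHeights_length, hlen]
  intro C h1 h2
  have hC : C < n + 2 := by rwa [colHeights_length] at h1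
  rw [colHeights_getElem _ C hC]
  have hsplit := card_filter_fin_succ (fun a : Fin (n + 2) => (upMap n (zidx k j) j g a : ℕ) = C)
  rw [upMap_zero (by omega)] at hsplit
  have hgetD : k[C]'h2 = k.getD C 0 := (List.getD_eq_getElem _ _ (by omega)).symm
  rw [hgetD, k_getD_split hlen hj C hC]
  by_cases hCz : C = zidx k j
  · have hempty : (univ.filter fun a : Fin (n + 1) =>
        (upMap n (zidx k j) j g a.succ : ℕ) = C) = ∅ := by
      rw [Finset.eq_empty_iff_forall_notMem]
      intro a ha
      rw [mem_filter] at ha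
      have := ha.2
      rw [upMap_succ, growF_val] at this
      exact grow_ne _ _ (by rw [this, hCz])
    rw [hempty, Finset.card_empty] at hsplit
    have h0 : (kset k j).getD C 0 = 0 := by rw [hCz]; exact kset_getD_z hlen hsum hj
    rw [h0]
    omega
  · have hcong : (univ.filter fun a : Fin (n + 1) =>
        (upMap n (zidx k j) j g a.succ : ℕ) = C)
        = (univ.filter fun a : Fin (n + 1) => (g a : ℕ) = shrink (zidx k j) C) := by
      ext a
      simp only [mem_filter, mem_univ, true_and]
      rw [upMap_succ, growF_val, grow_eq_iff hCz]
    have hshrC : shrink (zidx k j) C < n + 1 := by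
      simp only [shrink]; split_ifs <;> omega
    have hcnt : (univ.filter fun a : Fin (n + 1) => (g a : ℕ) = shrink (zidx k j) C).card
        = (kset k j).getD C 0 := by
      rw [heights_cnt hgcol _ hshrC, ktilde_getD hlen hsum hj _ hshrC, grow_shrink hCz]
    rw [hcong, hcnt] at hsplit
    omega

lemma up_parking {n j : ℕ} {k : List ℕ} (hlen : k.length = n + 2) (hsum : k.sum = n + 2)
    (hj : j < k.idxOf 0) {g : Fin (n + 1) → Fin (n + 1)} (hpark : IsParking (n + 1) g) :
    IsParking (n + 2) (upMap n (zidx k j) j g) := by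
  intro i hi
  have hz := zidx_lt hlen hsum hj
  have hz' : zidx k j ≤ n + 1 := by omega
  have hjz := j_le_zidx hlen hsum hj
  have hsplit := card_filter_fin_succ (fun a : Fin (n + 2) => (upMap n (zidx k j) j g a : ℕ) < i)
  rw [upMap_zero (by omega)] at hsplit
  by_cases hiz : i ≤ zidx k j
  · have hcong : (univ.filter fun a : Fin (n + 1) =>
        (upMap n (zidx k j) j g a.succ : ℕ) < i)
        = (univ.filter fun a : Fin (n + 1) => (g a : ℕ) < i) := by
      ext a
      simp only [mem_filter, mem_univ, true_and]
      rw [upMap_succ, growF_val, grow_lt_iff', if_pos hiz]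
    rw [hcong] at hsplit
    have hp := hpark i (by omega)
    omega
  · have hcong : (univ.filter fun a : Fin (n + 1) =>
        (upMap n (zidx k j) j g a.succ : ℕ) < i)
        = (univ.filter fun a : Fin (n + 1) => (g a : ℕ) < i - 1) := by
      ext a
      simp only [mem_filter, mem_univ, true_and]
      rw [upMap_succ, growF_val, grow_lt_iff', if_neg hiz]
    rw [hcong, if_pos (by omega : j < i)] at hsplit
    have hp := hpark (i - 1) (by omega)
    omega

lemma up_dom {n j : ℕ} {k : List ℕ} (hlen : k.length = n + 2) (hsum : k.sum = n + 2)
    (hj : j < k.idxOf 0) {g : Fin (n + 1) → Fin (n + 1)} (hcpf : IsCPF (n + 1) g)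
    (hgcol : colHeights g = ktilde k j) (a : Fin (n + 2)) :
    domIndex (upMap n (zidx k j) j g) a < (a : ℕ) + 1 := by
  have hz := zidx_lt hlen hsum hj
  have hz' : zidx k j ≤ n + 1 := by omega
  have hjz := j_le_zidx hlen hsum hj
  set z := zidx k j with hzdef
  set F := upMap n z j g with hFdef
  have hFh := up_heights hlen hsum hj hgcol
  rcases Fin.eq_zero_or_eq_succ a with rfl | ⟨a', rfl⟩
  · have hempty : (univ.filter fun C : Fin (n + 2) =>
        C < F 0 ∧ ∀ b, F b = C → b < 0) = ∅ := by
      rw [Finset.eq_empty_iff_forall_notMem]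
      intro C hC
      rw [mem_filter] at hC
      obtain ⟨-, hC1, hC2⟩ := hC
      have hCj : (C : ℕ) < j := by
        have := Fin.lt_def.1 hC1
        rwa [upMap_zero (by omega)] at this
      have hcnt : (univ.filter fun b : Fin (n + 2) => (F b : ℕ) = (C : ℕ)).card
          = k.getD (C : ℕ) 0 := heights_cnt hFh (C : ℕ) C.isLt
      have hpos : 1 ≤ k.getD (C : ℕ) 0 := by
        rw [k_getD_split hlen hj (C : ℕ) C.isLt]
        have := kset_pos hlen hsum hj (C : ℕ) (by omega)
        omega
      have : 0 < (univ.filter fun b : Fin (n + 2) => (F b : ℕ) = (C : ℕ)).card := by omega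
      obtain ⟨b, hb⟩ := Finset.card_pos.1 this
      rw [mem_filter] at hb
      have : b < (0 : Fin (n + 2)) := hC2 b (Fin.ext hb.2)
      exact absurd this (by simp [Fin.lt_def])
    unfold domIndex
    rw [hempty]
    simp
  · have hsub : (univ.filter fun C : Fin (n + 2) =>
        C < F a'.succ ∧ ∀ b, F b = C → b < a'.succ)
        ⊆ insert (⟨z, by omega⟩ : Fin (n + 2))
          ((univ.filter fun c : Fin (n + 1) => c < g a' ∧ ∀ b, g b = c → b < a').image
            (growF n z)) := by
      intro C hC
      rw [mem_filter] at hC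
      obtain ⟨-, hC1, hC2⟩ := hC
      rw [mem_insert]
      by_cases hCz : (C : ℕ) = z
      · exact Or.inl (Fin.ext hCz)
      · refine Or.inr (Finset.mem_image.2 ⟨shrinkF n z C, mem_filter.2 ⟨mem_univ _, ?_, ?_⟩, ?_⟩)
        · rw [Fin.lt_def, shrinkF_val hz']
          have := Fin.lt_def.1 hC1
          rw [hFdef, upMap_succ, growF_val] at this
          exact (lt_grow_iff hCz).1 this
        · intro b hb
          have hFb : F b.succ = C := by
            rw [hFdef, upMap_succ]
            apply Fin.ext
            rw [growF_val, congrArg Fin.val hb, shrinkF_val hz', grow_shrink hCz]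
          have := hC2 b.succ hFb
          exact Fin.succ_lt_succ_iff.1 this
        · apply Fin.ext
          rw [growF_val, shrinkF_val hz', grow_shrink hCz]
    have h1 := Finset.card_le_card hsub
    have h2 := Finset.card_insert_le (⟨z, by omega⟩ : Fin (n + 2))
      ((univ.filter fun c : Fin (n + 1) => c < g a' ∧ ∀ b, g b = c → b < a').image (growF n z))
    have h3 := Finset.card_image_le
      (s := univ.filter fun c : Fin (n + 1) => c < g a' ∧ ∀ b, g b = c → b < a')
      (f := growF n z)
    have h4 := hcpf.2 a'
    unfold domIndex at h4 ⊢
    have h5 : (a'.succ : ℕ) = (a' : ℕ) + 1 := rfl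
    omega


-- ==== the two maps are inverse ====

lemma up_down {n j : ℕ} {k : List ℕ} (hlen : k.length = n + 2) (hsum : k.sum = n + 2)
    (hj : j < k.idxOf 0) {f : Fin (n + 2) → Fin (n + 2)} (hcol : colHeights f = k)
    (hf0 : (f 0 : ℕ) = j) :
    upMap n (zidx k j) j (downMap n (zidx k j) f) = f := by
  have hz := zidx_lt hlen hsum hj
  have hz' : zidx k j ≤ n + 1 := by omega
  have hjz := j_le_zidx hlen hsum hj
  have havoid := avoid_z hlen hsum hj hcol hf0
  funext a
  rcases Fin.eq_zero_or_eq_succ a with rfl | ⟨b, rfl⟩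
  · apply Fin.ext
    rw [upMap_zero (by omega)]
    exact hf0.symm
  · apply Fin.ext
    rw [upMap_succ, growF_val, downMap_val hz', grow_shrink (havoid b)]

lemma down_up {n j : ℕ} {k : List ℕ} (hlen : k.length = n + 2) (hsum : k.sum = n + 2)
    (hj : j < k.idxOf 0) (g : Fin (n + 1) → Fin (n + 1)) :
    downMap n (zidx k j) (upMap n (zidx k j) j g) = g := by
  have hz := zidx_lt hlen hsum hj
  have hz' : zidx k j ≤ n + 1 := by omega
  funext a
  apply Fin.ext
  rw [downMap_val hz', upMap_succ, growF_val, shrink_grow]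

-- ==== the smallest label sits left of the first empty column ====

lemma f0_lt {n : ℕ} {k : List ℕ} (hlen : k.length = n + 2) {f : Fin (n + 2) → Fin (n + 2)}
    (hcpf : IsCPF (n + 2) f) (hcol : colHeights f = k) : (f 0 : ℕ) < k.idxOf 0 := by
  have hd := hcpf.2 0
  rw [Fin.val_zero] at hd
  have hne : ∀ C : Fin (n + 2), (C : ℕ) ≤ (f 0 : ℕ) → k.getD (C : ℕ) 0 ≠ 0 := by
    intro C hC
    rw [← heights_cnt hcol (C : ℕ) C.isLt]
    rcases eq_or_lt_of_le hC with heq | hlt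
    · intro h0
      rw [Finset.card_eq_zero] at h0
      have hmem : (0 : Fin (n + 2)) ∈ (univ.filter fun a => (f a : ℕ) = (C : ℕ)) :=
        mem_filter.2 ⟨mem_univ _, heq.symm⟩
      rw [h0] at hmem
      exact notMem_empty _ hmem
    · intro h0
      rw [Finset.card_eq_zero] at h0
      have hC_mem : C ∈ (univ.filter fun c : Fin (n + 2) => c < f 0 ∧ ∀ b, f b = c → b < 0) := by
        refine mem_filter.2 ⟨mem_univ _, Fin.lt_def.2 hlt, fun b hb => ?_⟩
        exfalso
        have : b ∈ (univ.filter fun a => (f a : ℕ) = (C : ℕ)) :=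
          mem_filter.2 ⟨mem_univ _, by rw [hb]⟩
        rw [h0] at this
        exact notMem_empty _ this
      have : 0 < domIndex f 0 := by
        unfold domIndex
        exact Finset.card_pos.2 ⟨C, hC_mem⟩
      omega
  by_contra hcon
  push_neg at hcon
  have hlt2 : k.idxOf 0 < k.length := by
    have := (f 0).isLt
    omega
  have hget := List.getElem_idxOf hlt2
  have hne2 := hne ⟨k.idxOf 0, by omega⟩ (by simpa using hcon)
  rw [List.getD_eq_getElem _ _ hlt2] at hne2
  exact hne2 hget

-- ==== from Nat.card to Finset.card ====

lemma cpfCountWith_eq_card (N : ℕ) (k : List ℕ) :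
    cpfCountWith N k
      = (univ.filter fun f : Fin N → Fin N => IsCPF N f ∧ colHeights f = k).card := by
  rw [cpfCountWith, Nat.card_eq_fintype_card, Fintype.card_subtype]

-- ==== the fiber bijection ====

lemma fiber_card {n j : ℕ} {k : List ℕ} (hlen : k.length = n + 2) (hsum : k.sum = n + 2)
    (hj : j < k.idxOf 0) :
    ((univ.filter fun f : Fin (n + 2) → Fin (n + 2) => IsCPF (n + 2) f ∧ colHeights f = k).filter
      (fun f => (f 0 : ℕ) = j)).card
    = (univ.filter fun g : Fin (n + 1) → Fin (n + 1) =>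
        IsCPF (n + 1) g ∧ colHeights g = ktilde k j).card := by
  have hz := zidx_lt hlen hsum hj
  have hjz := j_le_zidx hlen hsum hj
  apply Finset.card_nbij' (downMap n (zidx k j)) (upMap n (zidx k j) j)
  · intro f hf
    rw [Finset.mem_coe, mem_filter] at hf
    obtain ⟨hf1, hf0⟩ := hf
    rw [mem_filter] at hf1
    obtain ⟨-, hcpf, hcol⟩ := hf1
    exact mem_filter.2 ⟨mem_univ _,
      ⟨down_parking hlen hsum hj hcpf.1 hcol hf0, down_dom hlen hsum hj hcpf hcol hf0⟩,
      down_heights hlen hsum hj hcol hf0⟩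
  · intro g hg
    rw [Finset.mem_coe, mem_filter] at hg
    obtain ⟨-, hcpf, hgcol⟩ := hg
    exact mem_filter.2 ⟨mem_filter.2 ⟨mem_univ _,
      ⟨up_parking hlen hsum hj hcpf.1, up_dom hlen hsum hj hcpf hgcol⟩,
      up_heights hlen hsum hj hgcol⟩, upMap_zero (by omega) g⟩
  · intro f hf
    rw [Finset.mem_coe, mem_filter] at hf
    obtain ⟨hf1, hf0⟩ := hf
    rw [mem_filter] at hf1
    obtain ⟨-, -, hcol⟩ := hf1
    exact up_down hlen hsum hj hcol hf0
  · intro g _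
    exact down_up hlen hsum hj g

-- ==== the recursion ====

lemma step {n : ℕ} {k : List ℕ} (hlen : k.length = n + 2) (hsum : k.sum = n + 2) :
    cpfCountWith (n + 2) k = ∑ j ∈ Finset.range (k.idxOf 0), cpfCountWith (n + 1) (ktilde k j) := by
  rw [cpfCountWith_eq_card]
  rw [Finset.card_eq_sum_card_fiberwise (f := fun f => ((f 0 : ℕ)))
      (t := Finset.range (k.idxOf 0))
      (fun f hf => by
        rw [Finset.mem_coe, mem_filter] at hf
        rw [Finset.mem_coe, mem_range]
        exact f0_lt hlen hf.2.1 hf.2.2)]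
  refine Finset.sum_congr rfl fun j hj => ?_
  rw [mem_range] at hj
  rw [cpfCountWith_eq_card]
  exact fiber_card hlen hsum hj

-- ==== base case ====

lemma base_case : cpfCountWith 1 [1] = 1 := by
  rw [cpfCountWith_eq_card]
  have hset : (univ.filter fun f : Fin 1 → Fin 1 => IsCPF 1 f ∧ colHeights f = [1])
      = {fun _ => 0} := by
    ext f
    simp only [mem_filter, mem_univ, true_and, mem_singleton]
    constructor
    · intro _
      funext a
      exact Subsingleton.elim _ _
    · rintro rfl
      refine ⟨⟨?_, ?_⟩, ?_⟩
      · intro i hi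
        interval_cases i
        · simp
        · have huniv : (univ.filter fun a : Fin 1 => (((fun _ => (0 : Fin 1)) a : Fin 1) : ℕ) < 1)
              = univ := by
            ext a
            simp
          rw [huniv]
          simp
      · intro a
        have hzero : domIndex (fun _ => (0 : Fin 1)) a = 0 := by
          unfold domIndex
          rw [Finset.card_eq_zero, Finset.eq_empty_iff_forall_notMem]
          intro c hc
          rw [mem_filter] at hc
          have := Fin.lt_def.1 hc.2.1
          omega
        omega
      · have hfuniv : (univ.filter fun a : Fin 1 => (fun _ => (0 : Fin 1)) a = (0 : Fin 1))
            = univ := by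
          ext a
          simp
        simp [colHeights, List.ofFn_succ, List.ofFn_zero, hfuniv]
  rw [hset, Finset.card_singleton]

/-- For every n ≥ 1 and every weak composition k ∈ Comp(n,n),
|CPF(n,k)| = ⟨⟨n;k⟩⟩. -/
theorem statement0 (n : ℕ) (hn : 1 ≤ n) (k : List ℕ)
    (hlen : k.length = n) (hsum : k.sum = n) :
    cpfCountWith n k = amc n k := by
  suffices H : ∀ n : ℕ, ∀ k : List ℕ, 1 ≤ n → k.length = n → k.sum = n →
      cpfCountWith n k = amc n k from H n k hn hlen hsum
  clear hn hlen hsum k n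
  intro n
  induction n using Nat.strong_induction_on with
  | _ n IH =>
    intro k hn hlen hsum
    match n, hn with
    | 1, _ =>
      have hk : k = [1] := by
        rcases k with _ | ⟨a, _ | ⟨b, t⟩⟩
        · simp at hlen
        · simp at hsum
          rw [hsum]
        · simp at hlen
      subst hk
      rw [base_case]
      simp [amc]
    | (m + 2), _ =>
      rw [step hlen hsum]
      have hamc : amc (m + 2) k = ∑ j ∈ Finset.range (k.idxOf 0), amc (m + 1) (ktilde k j) := by
        simp [amc]
      rw [hamc]
      refine Finset.sum_congr rfl fun j hj => ?_
      rw [mem_range] at hj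
      exact IH (m + 1) (by omega) _ (by omega)
        (ktilde_length hlen hsum hj) (ktilde_sum hlen hsum hj)
end

section
/- For every n ≥ 1, the sum of the asymmetric multinomial coefficients over all weak compositions of n of length n equals the odd double factorial: Σ_{k ∈ Comp(n,n)} ⟨⟨n;k⟩⟩ = (2n−1)!!. -/
open Finset

namespace AMCaux

lemma L_getD (A : List ℕ) (a : ℕ) (B : List ℕ) : (A ++ a :: B).getD A.length 0 = a := by
  induction A with
  | nil => rfl
  | cons x t ih => simpa using ih

lemma L_set (A : List ℕ) (a v : ℕ) (B : List ℕ) :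
    (A ++ a :: B).set A.length v = A ++ v :: B := by
  induction A with
  | nil => rfl
  | cons x t ih => simpa using ih

lemma L_cons_pos {a : ℕ} (ha : a ≠ 0) (B : List ℕ) :
    (a :: B).idxOf 0 = B.idxOf 0 + 1 := by
  rw [List.idxOf_cons]
  simp [beq_eq_false_iff_ne.mpr ha]

lemma L_idxOf_append {A : List ℕ} (hA : 0 ∉ A) (B : List ℕ) :
    (A ++ B).idxOf 0 = A.length + B.idxOf 0 := by
  induction A with
  | nil => simp
  | cons x t ih =>
    have hx : x ≠ 0 := fun h => hA (by simp [h])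
    have ht : 0 ∉ t := fun h => hA (by simp [h])
    simp only [List.cons_append, L_cons_pos hx, ih ht, List.length_cons]
    omega

lemma L_not_mem_take (l : List ℕ) (j : ℕ) (h : j ≤ l.idxOf 0) : 0 ∉ l.take j := by
  induction l generalizing j with
  | nil => simp
  | cons x t ih =>
    cases j with
    | zero => simp
    | succ j =>
      by_cases hx : x = 0
      · subst hx; simp at h
      · rw [L_cons_pos hx] at h
        simp only [List.take_succ_cons, List.mem_cons]
        rintro (rfl | hmem)
        · exact hx rfl
        · exact ih j (by omega) hmem

lemma L_getD_pos (l : List ℕ) (j : ℕ) (h : j < l.idxOf 0) : l.getD j 0 ≠ 0 := by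
  induction l generalizing j with
  | nil => simp at h
  | cons x t ih =>
    by_cases hx : x = 0
    · subst hx; simp at h
    · rw [L_cons_pos hx] at h
      cases j with
      | zero => simpa using hx
      | succ j => simpa using ih j (by omega)

lemma L_getD_idxOf (l : List ℕ) (h : l.idxOf 0 < l.length) : l.getD (l.idxOf 0) 0 = 0 := by
  induction l with
  | nil => simp at h
  | cons x t ih =>
    by_cases hx : x = 0
    · subst hx; simp
    · rw [L_cons_pos hx] at h ⊢
      simpa using ih (by simpa using h)

lemma L_all_one (l : List ℕ) (h0 : 0 ∉ l) (hs : l.sum = l.length) : ∀ x ∈ l, x = 1 := by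
  induction l with
  | nil => simp
  | cons x t ih =>
    have hx : x ≠ 0 := fun h => h0 (by simp [h])
    have ht : 0 ∉ t := fun h => h0 (by simp [h])
    have hlen : t.length ≤ t.sum :=
      List.length_le_sum_of_one_le t
        (fun y hy => Nat.one_le_iff_ne_zero.mpr (fun h => ht (h ▸ hy)))
    simp only [List.sum_cons, List.length_cons] at hs
    have hx1 : x = 1 := by omega
    have hts : t.sum = t.length := by omega
    intro y hy
    rcases List.mem_cons.mp hy with rfl | hy
    · exact hx1
    · exact ih ht hts y hy

lemma L_decomp (l : List ℕ) (j : ℕ) (h : j < l.length) :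
    l = l.take j ++ l.getD j 0 :: l.drop (j + 1) := by
  conv_lhs => rw [← List.take_append_drop j l]
  rw [List.drop_eq_getElem_cons h, List.getD_eq_getElem l 0 h]

lemma L_take_len (l : List ℕ) (j : ℕ) (h : j ≤ l.length) : (l.take j).length = j := by
  simp [List.length_take, Nat.min_eq_left h]

lemma ktilde_case1 {A : List ℕ} (hA : 0 ∉ A) (R : List ℕ) :
    ktilde (A ++ 1 :: R) A.length = A ++ R := by
  rw [ktilde, L_getD, L_set, List.erase_append_right _ hA, List.erase_cons_head]

lemma ktilde_case2 {A : List ℕ} (hA : 0 ∉ A) (a : ℕ) (ha : a ≠ 0) {M : List ℕ}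
    (hM : 0 ∉ M) (Q : List ℕ) :
    ktilde (A ++ (a + 1) :: (M ++ 0 :: Q)) A.length = A ++ a :: (M ++ Q) := by
  rw [ktilde, L_getD, Nat.add_sub_cancel, L_set]
  have hpre : 0 ∉ A ++ a :: M := by
    simp only [List.mem_append, List.mem_cons]
    rintro (h | h | h)
    · exact hA h
    · exact ha h.symm
    · exact hM h
  calc (A ++ (a :: (M ++ 0 :: Q))).erase 0 = ((A ++ a :: M) ++ 0 :: Q).erase 0 := by simp
    _ = (A ++ a :: M) ++ Q := by
        rw [List.erase_append_right _ hpre, List.erase_cons_head]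
    _ = A ++ a :: (M ++ Q) := by simp


/-- compositions of `s` with `l` parts, as lists -/
def lcomps (l s : ℕ) : Finset (List ℕ) := (Finset.Nat.antidiagonalTuple l s).image List.ofFn

lemma mem_lcomps {l s : ℕ} {L : List ℕ} : L ∈ lcomps l s ↔ L.length = l ∧ L.sum = s := by
  constructor
  · rintro h
    obtain ⟨v, hv, rfl⟩ := Finset.mem_image.mp h
    rw [Finset.Nat.mem_antidiagonalTuple] at hv
    exact ⟨by simp, by rw [List.sum_ofFn]; exact hv⟩
  · rintro ⟨rfl, hs⟩
    refine Finset.mem_image.mpr ⟨L.get, ?_, List.ofFn_get L⟩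
    rw [Finset.Nat.mem_antidiagonalTuple, ← List.sum_ofFn, List.ofFn_get]
    exact hs

/-- inverse of `fun L => ktilde L j` on compositions with first zero at `i` -/
def Ginv (i j : ℕ) (m : List ℕ) : List ℕ :=
  if i ≤ m.idxOf 0 then (m.take i ++ 0 :: m.drop i).set j (m.getD j 0 + 1)
  else m.take j ++ 1 :: m.drop j

lemma forward (N i j : ℕ) (hi : 1 ≤ i) (hj : j < i) (L : List ℕ)
    (hlen : L.length = N + 1) (hsum : L.sum = N + 1) (hd : L.idxOf 0 = i) :
    (ktilde L j).length = N ∧ (ktilde L j).sum = N ∧ i - 1 ≤ (ktilde L j).idxOf 0 ∧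
    Ginv i j (ktilde L j) = L := by
  have hiN : i ≤ N + 1 := by rw [← hd, ← hlen]; exact List.idxOf_le_length
  have hjlen : j < L.length := by omega
  set A := L.take j with hA_def
  set a := L.getD j 0 with ha_def
  set R := L.drop (j + 1) with hR_def
  have hLdec : L = A ++ a :: R := L_decomp L j hjlen
  have hA : 0 ∉ A := L_not_mem_take L j (by omega)
  have hAlen : A.length = j := L_take_len L j (by omega)
  have ha : a ≠ 0 := L_getD_pos L j (by omega)
  have hlen' : j + (R.length + 1) = N + 1 := by
    have := congrArg List.length hLdec
    simp [hAlen] at this; omega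
  have hsum' : A.sum + (a + R.sum) = N + 1 := by
    have := congrArg List.sum hLdec
    simp at this; omega
  have hidx' : j + (R.idxOf 0 + 1) = i := by
    have h2 : (A ++ a :: R).idxOf 0 = i := by rw [← hLdec]; exact hd
    rwa [L_idxOf_append hA, L_cons_pos ha, hAlen] at h2
  by_cases ha1 : a = 1
  · -- case A : entry 1 at position j, it is erased
    have hk : ktilde L j = A ++ R := by
      rw [hLdec, ha1, ← hAlen]; exact ktilde_case1 hA R
    have hmlen : (A ++ R).length = N := by simp [hAlen]; omega
    have hmsum : (A ++ R).sum = N := by simp; omega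
    have hmidx : (A ++ R).idxOf 0 = i - 1 := by
      rw [L_idxOf_append hA, hAlen]; omega
    refine ⟨by rw [hk]; exact hmlen, by rw [hk]; exact hmsum, by rw [hk]; omega, ?_⟩
    rw [hk]
    simp only [Ginv, hmidx]
    rw [if_neg (by omega)]
    rw [← hAlen, List.take_left, List.drop_left]
    rw [hLdec, ha1]
  · -- case B : entry ≥ 2 at position j, the first zero (position i) is erased
    have hilt : i < N + 1 := by
      by_contra hcon
      have hieq : L.idxOf 0 = L.length := by omega
      have h0L : 0 ∉ L := List.idxOf_eq_length_iff.mp hieq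
      have : a = 1 := L_all_one L h0L (by omega) a (by rw [hLdec]; simp)
      exact ha1 this
    have hR0 : R.idxOf 0 < R.length := by omega
    set tZ := R.idxOf 0 with htZ_def
    set M := R.take tZ with hM_def
    set Q := R.drop (tZ + 1) with hQ_def
    have hRdec : R = M ++ 0 :: Q := by
      have hg : R.getD tZ 0 = 0 := L_getD_idxOf R hR0
      have := L_decomp R tZ hR0
      rw [hg] at this
      rw [hM_def, hQ_def]
      exact this
    have hM : 0 ∉ M := L_not_mem_take R tZ le_rfl
    have hMlen : M.length = tZ := L_take_len R tZ (le_of_lt hR0)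
    obtain ⟨b, hb_eq⟩ : ∃ b, a = b + 1 := ⟨a - 1, by omega⟩
    have hb : b ≠ 0 := by omega
    have hQlen : tZ + (Q.length + 1) = R.length := by
      have := congrArg List.length hRdec
      simp [hMlen] at this; omega
    have hk : ktilde L j = A ++ b :: (M ++ Q) := by
      rw [hLdec, hRdec, hb_eq, ← hAlen]; exact ktilde_case2 hA b hb hM Q
    have hQsum : M.sum + Q.sum = R.sum := by
      have := congrArg List.sum hRdec
      simp at this; omega
    have hmlen : (A ++ b :: (M ++ Q)).length = N := by simp [hAlen, hMlen]; omega
    have hmsum : (A ++ b :: (M ++ Q)).sum = N := by simp; omega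
    have hpre : 0 ∉ A ++ b :: M := by
      simp only [List.mem_append, List.mem_cons]
      rintro (h | h | h)
      · exact hA h
      · exact hb h.symm
      · exact hM h
    have hprelen : (A ++ b :: M).length = i := by simp [hAlen, hMlen]; omega
    have hmidx : (A ++ b :: (M ++ Q)).idxOf 0 = i + Q.idxOf 0 := by
      have : A ++ b :: (M ++ Q) = (A ++ b :: M) ++ Q := by simp
      rw [this, L_idxOf_append hpre, hprelen]
    refine ⟨by rw [hk]; exact hmlen, by rw [hk]; exact hmsum, by rw [hk]; omega, ?_⟩
    rw [hk]
    simp only [Ginv, hmidx]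
    rw [if_pos (by omega)]
    have hgetD : (A ++ b :: (M ++ Q)).getD j 0 = b := by
      rw [← hAlen]; exact L_getD _ _ _
    rw [hgetD]
    have h1 : A ++ b :: (M ++ Q) = (A ++ b :: M) ++ Q := by simp
    have htake : ((A ++ b :: M) ++ Q).take i = A ++ b :: M := by
      rw [← hprelen]; exact List.take_left
    have hdrop : ((A ++ b :: M) ++ Q).drop i = Q := by
      rw [← hprelen]; exact List.drop_left
    rw [h1, htake, hdrop]
    have h2 : (A ++ b :: M) ++ 0 :: Q = A ++ b :: (M ++ 0 :: Q) := by simp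
    rw [h2, ← hAlen, L_set]
    rw [hLdec, hRdec, hb_eq]

lemma backward (N i j : ℕ) (hi : 1 ≤ i) (hj : j < i) (m : List ℕ)
    (hlen : m.length = N) (hsum : m.sum = N) (hd : i - 1 ≤ m.idxOf 0) :
    (Ginv i j m).length = N + 1 ∧ (Ginv i j m).sum = N + 1 ∧
    (Ginv i j m).idxOf 0 = i ∧ ktilde (Ginv i j m) j = m := by
  have hdlen : m.idxOf 0 ≤ N := by rw [← hlen]; exact List.idxOf_le_length
  by_cases hbr : i ≤ m.idxOf 0
  · -- insert a zero at position i and increment entry j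
    have hiN : i ≤ N := le_trans hbr hdlen
    have hjm : j < m.length := by omega
    set A := m.take j with hA_def
    set b := m.getD j 0 with hb_def
    set R := m.drop (j + 1) with hR_def
    have hmdec : m = A ++ b :: R := L_decomp m j hjm
    have hA : 0 ∉ A := L_not_mem_take m j (by omega)
    have hAlen : A.length = j := L_take_len m j (by omega)
    have hb : b ≠ 0 := L_getD_pos m j (by omega)
    have hlen' : j + (R.length + 1) = N := by
      have := congrArg List.length hmdec
      simp [hAlen] at this; omega
    have hsum' : A.sum + (b + R.sum) = N := by
      have := congrArg List.sum hmdec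
      simp at this; omega
    have hidx' : j + (R.idxOf 0 + 1) = m.idxOf 0 := by
      have h2 : (A ++ b :: R).idxOf 0 = m.idxOf 0 := by rw [← hmdec]
      rwa [L_idxOf_append hA, L_cons_pos hb, hAlen] at h2
    set M := R.take (i - j - 1) with hM_def
    set Q := R.drop (i - j - 1) with hQ_def
    have hRdec : R = M ++ Q := (List.take_append_drop _ R).symm
    have hM : 0 ∉ M := L_not_mem_take R (i - j - 1) (by omega)
    have hMlen : M.length = i - j - 1 := L_take_len R (i - j - 1) (by omega)
    have hQlen : M.length + Q.length = R.length := by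
      have := congrArg List.length hRdec
      simp at this; omega
    have hQsum : M.sum + Q.sum = R.sum := by
      have := congrArg List.sum hRdec
      simp at this; omega
    have hpre : 0 ∉ A ++ b :: M := by
      simp only [List.mem_append, List.mem_cons]
      rintro (h | h | h)
      · exact hA h
      · exact hb h.symm
      · exact hM h
    have hprelen : (A ++ b :: M).length = i := by simp [hAlen, hMlen]; omega
    have h1 : m = (A ++ b :: M) ++ Q := by rw [hmdec, hRdec]; simp
    have htake : m.take i = A ++ b :: M := by
      rw [h1, ← hprelen]; exact List.take_left
    have hdrop : m.drop i = Q := by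
      rw [h1, ← hprelen]; exact List.drop_left
    have hG : Ginv i j m = A ++ (b + 1) :: (M ++ 0 :: Q) := by
      simp only [Ginv]
      rw [if_pos hbr, htake, hdrop, ← hb_def]
      have h2 : (A ++ b :: M) ++ 0 :: Q = A ++ b :: (M ++ 0 :: Q) := by simp
      rw [h2, ← hAlen, L_set]
    refine ⟨?_, ?_, ?_, ?_⟩
    · rw [hG]; simp [hAlen, hMlen]; omega
    · rw [hG]; simp; omega
    · rw [hG]
      have h3 : A ++ (b + 1) :: (M ++ 0 :: Q) = (A ++ (b + 1) :: M) ++ 0 :: Q := by simp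
      have hpre2 : 0 ∉ A ++ (b + 1) :: M := by
        simp only [List.mem_append, List.mem_cons]
        rintro (h | h | h)
        · exact hA h
        · omega
        · exact hM h
      rw [h3, L_idxOf_append hpre2, List.idxOf_cons_self]
      simp [hAlen, hMlen]; omega
    · rw [hG, ← hAlen, ktilde_case2 hA b hb hM Q, ← hRdec, ← hmdec]
  · -- insert a one at position j
    have hdm : m.idxOf 0 = i - 1 := by omega
    have hjm : j ≤ m.length := by omega
    set A := m.take j with hA_def
    set R := m.drop j with hR_def
    have hmdec : m = A ++ R := (List.take_append_drop _ m).symm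
    have hA : 0 ∉ A := L_not_mem_take m j (by omega)
    have hAlen : A.length = j := L_take_len m j hjm
    have hlen' : j + R.length = N := by
      have := congrArg List.length hmdec
      simp [hAlen] at this; omega
    have hsum' : A.sum + R.sum = N := by
      have := congrArg List.sum hmdec
      simp at this; omega
    have hidx' : j + R.idxOf 0 = i - 1 := by
      have h2 : (A ++ R).idxOf 0 = m.idxOf 0 := by rw [← hmdec]
      rw [L_idxOf_append hA, hAlen] at h2
      omega
    have hG : Ginv i j m = A ++ 1 :: R := by
      simp only [Ginv]
      rw [if_neg hbr]
    refine ⟨?_, ?_, ?_, ?_⟩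
    · rw [hG]; simp [hAlen]; omega
    · rw [hG]; simp; omega
    · rw [hG, L_idxOf_append hA, L_cons_pos one_ne_zero, hAlen]; omega
    · rw [hG, ← hAlen, ktilde_case1 hA R, ← hmdec]

/-- tail sums of amc over compositions with first zero at position `≥ i` -/
def TT (N i : ℕ) : ℕ :=
  ∑ L ∈ (lcomps N N).filter (fun L => i ≤ L.idxOf 0), amc N L

/-- sums of amc over compositions with first zero at position `= i` -/
def UU (N i : ℕ) : ℕ :=
  ∑ L ∈ (lcomps N N).filter (fun L => L.idxOf 0 = i), amc N L

lemma key_bij (N i j : ℕ) (hi : 1 ≤ i) (hj : j < i) :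
    ∑ L ∈ (lcomps (N + 1) (N + 1)).filter (fun L => L.idxOf 0 = i),
      amc N (ktilde L j) = TT N (i - 1) := by
  rw [TT]
  refine Finset.sum_nbij' (fun L => ktilde L j) (Ginv i j) ?_ ?_ ?_ ?_ ?_
  · intro L hL
    rw [Finset.mem_filter, mem_lcomps] at hL
    obtain ⟨⟨h1, h2⟩, h3⟩ := hL
    obtain ⟨g1, g2, g3, _⟩ := forward N i j hi hj L h1 h2 h3
    rw [Finset.mem_filter, mem_lcomps]
    exact ⟨⟨g1, g2⟩, g3⟩
  · intro m hm
    rw [Finset.mem_filter, mem_lcomps] at hm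
    obtain ⟨⟨h1, h2⟩, h3⟩ := hm
    obtain ⟨g1, g2, g3, _⟩ := backward N i j hi hj m h1 h2 h3
    rw [Finset.mem_filter, mem_lcomps]
    exact ⟨⟨g1, g2⟩, g3⟩
  · intro L hL
    rw [Finset.mem_filter, mem_lcomps] at hL
    obtain ⟨⟨h1, h2⟩, h3⟩ := hL
    exact (forward N i j hi hj L h1 h2 h3).2.2.2
  · intro m hm
    rw [Finset.mem_filter, mem_lcomps] at hm
    obtain ⟨⟨h1, h2⟩, h3⟩ := hm
    exact (backward N i j hi hj m h1 h2 h3).2.2.2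
  · intro L _
    rfl

lemma U_rec (N i : ℕ) (hN : 1 ≤ N) (hi : 1 ≤ i) :
    UU (N + 1) i = i * TT N (i - 1) := by
  obtain ⟨M, rfl⟩ : ∃ M, N = M + 1 := ⟨N - 1, by omega⟩
  rw [UU]
  have hstep : ∀ L ∈ (lcomps (M + 2) (M + 2)).filter (fun L => L.idxOf 0 = i),
      amc (M + 2) L = ∑ j ∈ Finset.range i, amc (M + 1) (ktilde L j) := by
    intro L hL
    rw [Finset.mem_filter] at hL
    show (∑ j ∈ Finset.range (L.idxOf 0), amc (M + 1) (ktilde L j)) = _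
    rw [hL.2]
  rw [Finset.sum_congr rfl hstep, Finset.sum_comm]
  have : ∀ j ∈ Finset.range i,
      (∑ L ∈ (lcomps (M + 2) (M + 2)).filter (fun L => L.idxOf 0 = i),
        amc (M + 1) (ktilde L j)) = TT (M + 1) (i - 1) := by
    intro j hj
    exact key_bij (M + 1) i j hi (Finset.mem_range.mp hj)
  rw [Finset.sum_congr rfl this, Finset.sum_const, Finset.card_range, smul_eq_mul]

lemma U_zero (N : ℕ) (hN : 2 ≤ N) : UU N 0 = 0 := by
  obtain ⟨M, rfl⟩ : ∃ M, N = M + 2 := ⟨N - 2, by omega⟩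
  rw [UU]
  refine Finset.sum_eq_zero ?_
  intro L hL
  rw [Finset.mem_filter] at hL
  show (∑ j ∈ Finset.range (L.idxOf 0), amc (M + 1) (ktilde L j)) = 0
  rw [hL.2]
  simp

lemma T_split (N i : ℕ) : TT N i = ∑ i' ∈ Finset.Icc i N, UU N i' := by
  rw [TT]
  rw [← Finset.sum_fiberwise_of_maps_to (g := fun L => L.idxOf 0)
    (t := Finset.Icc i N) ?_ (fun L => amc N L)]
  · refine Finset.sum_congr rfl ?_
    intro i' hi'
    rw [Finset.mem_Icc] at hi'
    rw [UU, Finset.filter_filter]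
    congr 1
    apply Finset.filter_congr
    intro L hL
    constructor
    · rintro ⟨_, h⟩; exact h
    · intro h; exact ⟨by omega, h⟩
  · intro L hL
    rw [Finset.mem_filter, mem_lcomps] at hL
    rw [Finset.mem_Icc]
    refine ⟨hL.2, ?_⟩
    rw [← hL.1.1]
    exact List.idxOf_le_length

lemma lcomps_one : lcomps 1 1 = {[1]} := by
  ext L
  rw [mem_lcomps, Finset.mem_singleton]
  constructor
  · rintro ⟨h1, h2⟩
    match L, h1 with
    | [x], _ =>
      simp only [List.sum_cons, List.sum_nil] at h2
      simp only [List.cons.injEq, and_true]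
      omega
  · rintro rfl
    simp

lemma TT_one (i : ℕ) (hi : i ≤ 1) : TT 1 i = 1 := by
  rw [TT, lcomps_one, Finset.filter_singleton]
  have hidx : ([1] : List ℕ).idxOf 0 = 1 := by
    rw [L_cons_pos one_ne_zero]; rfl
  rw [if_pos (by rw [hidx]; omega), Finset.sum_singleton]
  rfl

lemma arith_aux (N : ℕ) (f : ℕ → ℕ)
    (hf : ∀ i ≤ N, 2 ^ (N - i) * f i = N.factorial * ((2 * N - i).choose (N - i))) :
    ∀ d ≤ N, 2 ^ d * (∑ i' ∈ Finset.Icc (N + 1 - d) (N + 1), i' * f (i' - 1)) =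
      (N + 1).factorial * ((N + 1 + d).choose d) := by
  intro d
  induction d with
  | zero =>
    intro _
    have hfN : f N = N.factorial := by
      have := hf N le_rfl
      simpa using this
    simp [hfN, Nat.factorial_succ, Nat.mul_comm]
  | succ d ih =>
    intro hd
    have ih' := ih (by omega)
    obtain ⟨c, rfl⟩ : ∃ c, N = c + d + 1 := ⟨N - d - 1, by omega⟩
    have hIcc : Finset.Icc (c + d + 1 + 1 - (d + 1)) (c + d + 1 + 1) =
        insert (c + 1) (Finset.Icc (c + d + 1 + 1 - d) (c + d + 1 + 1)) := by
      ext x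
      simp only [Finset.mem_Icc, Finset.mem_insert]
      omega
    rw [hIcc, Finset.sum_insert (by simp [Finset.mem_Icc]; omega)]
    have h1 := hf c (by omega)
    have e1 : c + d + 1 - c = d + 1 := by omega
    have e2 : 2 * (c + d + 1) - c = c + 2 * d + 2 := by omega
    rw [e1, e2] at h1
    have e3 : c + 1 - 1 = c := by omega
    rw [e3]
    have pascal : (c + d + 1 + 1 + (d + 1)).choose (d + 1) =
        (c + 2 * d + 2).choose d + (c + 2 * d + 2).choose (d + 1) := by
      have e4 : c + d + 1 + 1 + (d + 1) = (c + 2 * d + 2) + 1 := by omega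
      rw [e4, Nat.choose_succ_succ]
    have e5 : c + d + 1 + 1 + d = c + 2 * d + 2 := by omega
    rw [e5] at ih'
    have key : (c + 2 * d + 2).choose (d + 1) * (d + 1) =
        (c + 2 * d + 2).choose d * (c + d + 2) := by
      have := Nat.choose_succ_right_eq (c + 2 * d + 2) d
      have e6 : c + 2 * d + 2 - d = c + d + 2 := by omega
      rwa [e6] at this
    rw [pascal]
    have hfac : (c + d + 1 + 1).factorial = (c + d + 2) * (c + d + 1).factorial := by
      have : c + d + 1 + 1 = c + d + 2 := by omega
      rw [this, Nat.factorial_succ]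
    -- goal is now a polynomial identity given h1, ih', key
    have expand : 2 ^ (d + 1) * ((c + 1) * f c +
        ∑ i' ∈ Finset.Icc (c + d + 1 + 1 - d) (c + d + 1 + 1), i' * f (i' - 1)) =
        (c + 1) * (2 ^ (d + 1) * f c) +
        2 * (2 ^ d * ∑ i' ∈ Finset.Icc (c + d + 1 + 1 - d) (c + d + 1 + 1), i' * f (i' - 1)) := by
      ring
    rw [expand, h1, ih', hfac]
    zify at key ⊢
    linear_combination (-((c + d + 1).factorial : ℤ)) * key

lemma T_closed : ∀ N, 1 ≤ N → ∀ i ≤ N,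
    2 ^ (N - i) * TT N i = N.factorial * ((2 * N - i).choose (N - i)) := by
  intro N
  induction N with
  | zero => omega
  | succ N ih =>
    intro _ i hi
    rcases Nat.eq_zero_or_pos N with rfl | hN
    · interval_cases i <;> simp [TT_one] <;> rfl
    · -- N ≥ 1
      have hTval : ∀ i', 1 ≤ i' → i' ≤ N + 1 →
          TT (N + 1) i' = ∑ x ∈ Finset.Icc i' (N + 1), x * TT N (x - 1) := by
        intro i' h1 h2
        rw [T_split]
        refine Finset.sum_congr rfl ?_
        intro x hx
        rw [Finset.mem_Icc] at hx
        exact U_rec N x hN (by omega)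
      have main : ∀ i', 1 ≤ i' → i' ≤ N + 1 →
          2 ^ (N + 1 - i') * TT (N + 1) i' =
          (N + 1).factorial * ((2 * (N + 1) - i').choose (N + 1 - i')) := by
        intro i' h1 h2
        rw [hTval i' h1 h2]
        have := arith_aux N (fun x => TT N x) (ih hN) (N + 1 - i') (by omega)
        have e1 : N + 1 - (N + 1 - i') = i' := by omega
        rw [e1] at this
        have e2 : N + 1 + (N + 1 - i') = 2 * (N + 1) - i' := by omega
        rw [e2] at this
        exact this
      rcases Nat.eq_zero_or_pos i with rfl | hipos
    -- i = 0 : reduce to i = 1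
      · have hT0 : TT (N + 1) 0 = TT (N + 1) 1 := by
          rw [T_split, T_split]
          have hIcc : Finset.Icc 0 (N + 1) = insert 0 (Finset.Icc 1 (N + 1)) := by
            ext x; simp only [Finset.mem_Icc, Finset.mem_insert]; omega
          rw [hIcc, Finset.sum_insert (by simp)]
          rw [U_zero (N + 1) (by omega)]
          omega
        have h1 := main 1 le_rfl (by omega)
        rw [hT0]
        have e7 : N + 1 - 1 = N := by omega
        have e3 : 2 * (N + 1) - 1 = 2 * N + 1 := by omega
        rw [e7, e3] at h1
        rw [Nat.sub_zero, Nat.sub_zero, pow_succ]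
        have e2 : 2 ^ N * 2 * TT (N + 1) 1 = 2 * (2 ^ N * TT (N + 1) 1) := by ring
        rw [e2, h1]
        have e4 : 2 * (N + 1) = (2 * N + 1) + 1 := by omega
        rw [e4, Nat.choose_succ_succ]
        have e5 : (2 * N + 1).choose (N + 1) = (2 * N + 1).choose N := by
          have := Nat.choose_symm (n := 2 * N + 1) (k := N) (by omega)
          have e6 : 2 * N + 1 - N = N + 1 := by omega
          rw [e6] at this
          exact this
        rw [e5]
        ring
      · exact main i hipos hi

theorem statement1' (n : ℕ) (hn : 1 ≤ n) :
    ∑ v ∈ Finset.Nat.antidiagonalTuple n n, amc n (List.ofFn v) =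
      Nat.doubleFactorial (2 * n - 1) := by
  have hsum : ∑ v ∈ Finset.Nat.antidiagonalTuple n n, amc n (List.ofFn v) = TT n 0 := by
    rw [TT, Finset.filter_true_of_mem (fun _ _ => Nat.zero_le _), lcomps]
    rw [Finset.sum_image (fun x _ y _ h => List.ofFn_injective h)]
  rw [hsum]
  have hclosed := T_closed n hn 0 (Nat.zero_le n)
  rw [Nat.sub_zero, Nat.sub_zero] at hclosed
  -- n! * C(2n, n) = 2^n * (2n-1)!!
  have hfact : (2 * n).factorial = (2 * n).choose n * n.factorial * n.factorial := by
    have := Nat.choose_mul_factorial_mul_factorial (n := 2 * n) (k := n) (by omega)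
    have e : 2 * n - n = n := by omega
    rw [e] at this
    exact this.symm
  have hdf : (2 * n).factorial = 2 ^ n * n.factorial * (2 * n - 1).doubleFactorial := by
    have e : 2 * n = (2 * n - 1) + 1 := by omega
    rw [e, Nat.factorial_eq_mul_doubleFactorial]
    have e2 : (2 * n - 1) + 1 = 2 * n := by omega
    rw [e2, Nat.doubleFactorial_two_mul]
  have hmain : 2 ^ n * n.factorial * TT n 0 =
      2 ^ n * n.factorial * (2 * n - 1).doubleFactorial := by
    calc 2 ^ n * n.factorial * TT n 0 = n.factorial * (2 ^ n * TT n 0) := by ring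
      _ = n.factorial * (n.factorial * (2 * n).choose n) := by rw [hclosed]
      _ = (2 * n).choose n * n.factorial * n.factorial := by ring
      _ = (2 * n).factorial := hfact.symm
      _ = 2 ^ n * n.factorial * (2 * n - 1).doubleFactorial := hdf
  exact Nat.eq_of_mul_eq_mul_left (by positivity) hmain

end AMCaux

/-- For every n ≥ 1, Σ_{k ∈ Comp(n,n)} ⟨⟨n;k⟩⟩ = (2n-1)!!. -/
theorem statement1 (n : ℕ) (hn : 1 ≤ n) :
    ∑ v ∈ Finset.Nat.antidiagonalTuple n n, amc n (List.ofFn v) =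
      Nat.doubleFactorial (2 * n - 1) := AMCaux.statement1' n hn
end

section
/- For every n ≥ 2, |CPF(n)| = (2n−1)·|CPF(n−1)|, i.e. the number of column-restricted parking functions of size n is (2n−1) times the number of column-restricted parking functions of size n−1. -/
open Finset

namespace CPFAux

instance (n : ℕ) : DecidablePred (IsParking n) := fun f => by
  unfold IsParking; infer_instance

instance (n : ℕ) : DecidablePred (IsCPF n) := fun f => by
  unfold IsCPF; infer_instance

/-- First empty column of `f` (or `n` if none). -/
def Zst {n : ℕ} (f : Fin n → Fin n) : ℕ :=
  Nat.find (show ∃ c, n ≤ c ∨ ∀ a, (f a : ℕ) ≠ c from ⟨n, Or.inl le_rfl⟩)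

lemma Zst_le {n : ℕ} (f : Fin n → Fin n) : Zst f ≤ n :=
  Nat.find_le (Or.inl le_rfl)

lemma exists_of_lt_Zst {n : ℕ} {f : Fin n → Fin n} {c : ℕ} (h : c < Zst f) :
    ∃ a, (f a : ℕ) = c := by
  have := Nat.find_min (show ∃ c, n ≤ c ∨ ∀ a, (f a : ℕ) ≠ c from ⟨n, Or.inl le_rfl⟩) h
  push_neg at this
  exact this.2

lemma Zst_empty {n : ℕ} {f : Fin n → Fin n} (h : Zst f < n) :
    ∀ a, (f a : ℕ) ≠ Zst f := by
  have := Nat.find_spec (show ∃ c, n ≤ c ∨ ∀ a, (f a : ℕ) ≠ c from ⟨n, Or.inl le_rfl⟩)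
  unfold Zst at h
  rcases this with h' | h'
  · omega
  · exact h'

lemma le_Zst {n : ℕ} {f : Fin n → Fin n} {z : ℕ}
    (h : ∀ c < z, ∃ a, (f a : ℕ) = c) (hz : z ≤ n) : z ≤ Zst f := by
  rw [Zst, Nat.le_find_iff]
  intro c hc
  rw [not_or]
  refine ⟨by omega, ?_⟩
  push_neg
  exact h c hc

lemma one_le_Zst {n : ℕ} {f : Fin n → Fin n} (hf : IsParking n f) (hn : 1 ≤ n) :
    1 ≤ Zst f := by
  apply le_Zst _ hn
  intro c hc
  interval_cases c
  have h1 := hf 1 hn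
  have h2 : (univ.filter fun a => (f a : ℕ) < 1).Nonempty := Finset.card_pos.mp (by omega)
  obtain ⟨a, ha⟩ := h2
  simp only [mem_filter, mem_univ, true_and] at ha
  exact ⟨a, by omega⟩

end CPFAux

section B
open Finset
namespace CPFAux

/-- First column containing no tail label. -/
def EF {m : ℕ} (f : Fin (m+1) → Fin (m+1)) : ℕ :=
  Nat.find (show ∃ c, ∀ a : Fin m, (f a.succ : ℕ) ≠ c from
    ⟨m+1, fun a => by have := (f a.succ).isLt; omega⟩)

lemma EF_spec {m : ℕ} (f : Fin (m+1) → Fin (m+1)) :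
    ∀ a : Fin m, (f a.succ : ℕ) ≠ EF f := by
  unfold EF
  exact Nat.find_spec (p := fun c => ∀ a : Fin m, (f a.succ : ℕ) ≠ c) _

lemma exists_of_lt_EF {m : ℕ} {f : Fin (m+1) → Fin (m+1)} {c : ℕ} (h : c < EF f) :
    ∃ a : Fin m, (f a.succ : ℕ) = c := by
  have := Nat.find_min (show ∃ c, ∀ a : Fin m, (f a.succ : ℕ) ≠ c from
    ⟨m+1, fun a => by have := (f a.succ).isLt; omega⟩) h
  push_neg at this
  exact this

lemma EF_le {m : ℕ} (f : Fin (m+1) → Fin (m+1)) : EF f ≤ m := by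
  have hpig : ∃ c : Fin (m+1), ∀ a : Fin m, f a.succ ≠ c := by
    by_contra h
    push_neg at h
    have hs : Function.Surjective (fun a : Fin m => f a.succ) := fun c => h c
    have := Fintype.card_le_of_surjective _ hs
    simp at this
  obtain ⟨c, hc⟩ := hpig
  have : EF f ≤ (c : ℕ) := Nat.find_min' _ (fun a h => hc a (Fin.ext h))
  have := c.isLt
  omega

def shiftc (e x : ℕ) : ℕ := if x < e then x else x + 1

def unshift (e x : ℕ) : ℕ := if x < e then x else x - 1

lemma shiftc_ne (e x : ℕ) : shiftc e x ≠ e := by unfold shiftc; split <;> omega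

lemma unshift_shiftc (e x : ℕ) : unshift e (shiftc e x) = x := by
  unfold shiftc unshift
  by_cases h : x < e
  · rw [if_pos h, if_pos h]
  · rw [if_neg h, if_neg (by omega)]; omega

lemma shiftc_unshift {e x : ℕ} (h : x ≠ e) : shiftc e (unshift e x) = x := by
  unfold shiftc unshift
  by_cases h' : x < e
  · rw [if_pos h', if_pos h']
  · rw [if_neg h', if_neg (by omega)]; omega

lemma shiftc_lt_iff (e : ℕ) {x y : ℕ} : shiftc e x < shiftc e y ↔ x < y := by
  unfold shiftc; split <;> split <;> omega

lemma shiftc_inj (e : ℕ) {x y : ℕ} (h : shiftc e x = shiftc e y) : x = y := by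
  unfold shiftc at h; revert h; split <;> split <;> omega

def ins {m : ℕ} (g : Fin m → Fin m) (e c₀ : ℕ) : Fin (m+1) → Fin (m+1) :=
  Fin.cases ⟨min c₀ m, by omega⟩
    (fun a => ⟨shiftc e (g a), by have := (g a).isLt; unfold shiftc; split <;> omega⟩)

lemma ins_zero {m : ℕ} (g : Fin m → Fin m) {e c₀ : ℕ} (h : c₀ ≤ m) :
    (ins g e c₀ 0 : ℕ) = c₀ := by
  simp [ins, h]

lemma ins_succ {m : ℕ} (g : Fin m → Fin m) (e c₀ : ℕ) (a : Fin m) :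
    (ins g e c₀ a.succ : ℕ) = shiftc e (g a) := by
  simp [ins]

def shr {m : ℕ} (f : Fin (m+1) → Fin (m+1)) (a : Fin m) : Fin m :=
  if h : unshift (EF f) (f a.succ : ℕ) < m then ⟨_, h⟩ else ⟨0, a.pos⟩

lemma shr_val {m : ℕ} (f : Fin (m+1) → Fin (m+1)) (a : Fin m) :
    (shr f a : ℕ) = unshift (EF f) (f a.succ : ℕ) := by
  have h1 := EF_le f
  have h2 := EF_spec f a
  have h3 := (f a.succ).isLt
  have h4 : unshift (EF f) (f a.succ : ℕ) < m := by unfold unshift; split <;> omega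
  rw [shr, dif_pos h4]

lemma card_filter_succ {m : ℕ} (P : Fin (m+1) → Prop) [DecidablePred P] :
    (univ.filter P).card
      = (if P 0 then 1 else 0) + (univ.filter fun a : Fin m => P a.succ).card := by
  rw [Finset.card_filter, Finset.card_filter, Fin.sum_univ_succ]

lemma ins_shr {m : ℕ} (f : Fin (m+1) → Fin (m+1)) :
    ins (shr f) (EF f) (f 0 : ℕ) = f := by
  funext x
  induction x using Fin.cases with
  | zero =>
    apply Fin.ext
    rw [ins_zero _ (by have := (f 0).isLt; omega)]
  | succ a =>
    apply Fin.ext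
    rw [ins_succ, shr_val, shiftc_unshift (EF_spec f a)]

lemma shr_ins {m : ℕ} {g : Fin m → Fin m} {e c₀ : ℕ} (hc : c₀ ≤ e) (he : e ≤ Zst g) :
    EF (ins g e c₀) = e ∧ shr (ins g e c₀) = g := by
  have hzm := Zst_le g
  have hEF : EF (ins g e c₀) = e := by
    apply le_antisymm
    · exact Nat.find_min' _ (fun a => by rw [ins_succ]; exact shiftc_ne e (g a))
    · rw [EF, Nat.le_find_iff]
      intro c hc'
      push_neg
      obtain ⟨a, ha⟩ := exists_of_lt_Zst (lt_of_lt_of_le hc' he)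
      refine ⟨a, ?_⟩
      rw [ins_succ]
      unfold shiftc
      rw [if_pos (by omega), ha]
  refine ⟨hEF, ?_⟩
  funext a
  apply Fin.ext
  rw [shr_val, hEF, ins_succ, unshift_shiftc]

end CPFAux
end B

section C
open Finset
namespace CPFAux

variable {m : ℕ} {g : Fin m → Fin m} {e c₀ : ℕ}

lemma ins_parking (hg : IsParking m g) (hc : c₀ ≤ e) (he : e ≤ Zst g) :
    IsParking (m+1) (ins g e c₀) := by
  have hzm := Zst_le g
  have hem : e ≤ m := le_trans he hzm
  have hcm : c₀ ≤ m := le_trans hc hem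
  intro i hi
  rw [card_filter_succ (P := fun a => ((ins g e c₀) a : ℕ) < i)]
  simp only [ins_succ, ins_zero g hcm]
  by_cases hie : i ≤ e
  · have hfil : (univ.filter fun a : Fin m => shiftc e (g a) < i)
        = (univ.filter fun a : Fin m => (g a : ℕ) < i) := by
      apply filter_congr
      intro b _
      unfold shiftc; split <;> omega
    rw [hfil]
    have := hg i (by omega)
    split <;> omega
  · push_neg at hie
    have hfil : (univ.filter fun a : Fin m => shiftc e (g a) < i)
        = (univ.filter fun a : Fin m => (g a : ℕ) < i - 1) := by
      apply filter_congr
      intro b _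
      unfold shiftc; split <;> omega
    rw [hfil]
    have := hg (i-1) (by omega)
    rw [if_pos (by omega)]
    omega

lemma dom_ins_zero (hc : c₀ ≤ e) (he : e ≤ Zst g) :
    domIndex (ins g e c₀) 0 = 0 := by
  have hzm := Zst_le g
  have hcm : c₀ ≤ m := by omega
  unfold domIndex
  rw [Finset.card_eq_zero, Finset.eq_empty_iff_forall_notMem]
  intro c hcmem
  simp only [mem_filter, mem_univ, true_and] at hcmem
  obtain ⟨h1, h2⟩ := hcmem
  rw [Fin.lt_def] at h1
  rw [ins_zero g hcm] at h1
  obtain ⟨b, hb⟩ := exists_of_lt_Zst (show (c:ℕ) < Zst g by omega)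
  have hbc : ins g e c₀ b.succ = c := by
    apply Fin.ext
    rw [ins_succ]
    unfold shiftc
    rw [if_pos (by omega)]
    exact hb
  exact absurd (h2 _ hbc) (Fin.not_lt_zero _)

lemma unshift_lt_of_lt_shiftc {e x y : ℕ} (hx : x ≠ e) (h : x < shiftc e y) :
    unshift e x < y := by
  unfold shiftc at h; unfold unshift
  split at h <;> split <;> omega

lemma dom_ins_succ (hc : c₀ ≤ e) (he : e ≤ Zst g) (a : Fin m) :
    domIndex (ins g e c₀) a.succ = domIndex g a + (if e ≤ (g a : ℕ) then 1 else 0) := by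
  have hzm := Zst_le g
  have hem : e ≤ m := le_trans he hzm
  have hQ : ∀ c : Fin (m+1),
      ((c < ins g e c₀ a.succ ∧ ∀ b, ins g e c₀ b = c → b < a.succ)
      ↔ ((c:ℕ) < shiftc e (g a) ∧ ∀ b : Fin m, shiftc e (g b) = (c:ℕ) → b < a)) := by
    intro c
    constructor
    · rintro ⟨h1, h2⟩
      rw [Fin.lt_def, ins_succ] at h1
      refine ⟨h1, fun b hb => ?_⟩
      have := h2 b.succ (Fin.ext (by rw [ins_succ]; exact hb))
      exact Fin.succ_lt_succ_iff.mp this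
    · rintro ⟨h1, h2⟩
      refine ⟨by rw [Fin.lt_def, ins_succ]; exact h1, fun b hb => ?_⟩
      rcases Fin.eq_zero_or_eq_succ b with rfl | ⟨b', rfl⟩
      · exact Fin.succ_pos a
      · have hv : shiftc e (g b') = (c:ℕ) := by
          rw [← ins_succ g e c₀ b']; exact congrArg Fin.val hb
        exact Fin.succ_lt_succ_iff.mpr (h2 b' hv)
  unfold domIndex
  rw [filter_congr (fun c _ => hQ c)]
  rw [← Finset.card_filter_add_card_filter_not
    (s := univ.filter fun c : Fin (m+1) =>
      (c:ℕ) < shiftc e (g a) ∧ ∀ b : Fin m, shiftc e (g b) = (c:ℕ) → b < a)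
    (p := fun c : Fin (m+1) => (c:ℕ) = e)]
  have hA : ((univ.filter fun c : Fin (m+1) =>
      (c:ℕ) < shiftc e (g a) ∧ ∀ b : Fin m, shiftc e (g b) = (c:ℕ) → b < a).filter
        fun c : Fin (m+1) => (c:ℕ) = e).card = if e ≤ (g a : ℕ) then 1 else 0 := by
    by_cases hga : e ≤ (g a : ℕ)
    · rw [if_pos hga]
      have : ((univ.filter fun c : Fin (m+1) =>
          (c:ℕ) < shiftc e (g a) ∧ ∀ b : Fin m, shiftc e (g b) = (c:ℕ) → b < a).filter
            fun c : Fin (m+1) => (c:ℕ) = e) = {(⟨e, by omega⟩ : Fin (m+1))} := by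
        ext c
        simp only [mem_filter, mem_univ, true_and, mem_singleton]
        constructor
        · rintro ⟨_, h3⟩
          exact Fin.ext h3
        · rintro rfl
          refine ⟨⟨?_, fun b hb => absurd hb (shiftc_ne e (g b))⟩, rfl⟩
          unfold shiftc
          rw [if_neg (by omega)]
          show e < (g a : ℕ) + 1
          omega
      rw [this, card_singleton]
    · rw [if_neg hga]
      rw [Finset.card_eq_zero, Finset.eq_empty_iff_forall_notMem]
      intro c hcm
      simp only [mem_filter, mem_univ, true_and] at hcm
      obtain ⟨⟨h1, _⟩, h3⟩ := hcm
      unfold shiftc at h1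
      rw [if_pos (by omega)] at h1
      omega
  have hB : ((univ.filter fun c : Fin (m+1) =>
      (c:ℕ) < shiftc e (g a) ∧ ∀ b : Fin m, shiftc e (g b) = (c:ℕ) → b < a).filter
        fun c : Fin (m+1) => ¬(c:ℕ) = e).card
      = (univ.filter fun c : Fin m => c < g a ∧ ∀ b, g b = c → b < a).card := by
    apply Finset.card_nbij'
      (i := fun c : Fin (m+1) =>
        if h : unshift e (c:ℕ) < m then (⟨unshift e (c:ℕ), h⟩ : Fin m) else ⟨0, a.pos⟩)
      (j := fun c' : Fin m =>
        (⟨shiftc e (c':ℕ), by have := c'.isLt; unfold shiftc; split <;> omega⟩ : Fin (m+1)))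
    · intro c hcm
      simp only [Finset.mem_coe, mem_filter, mem_univ, true_and] at hcm ⊢
      obtain ⟨⟨h1, h2⟩, h3⟩ := hcm
      have hu : unshift e (c:ℕ) < m := by
        have := c.isLt; unfold unshift; split <;> omega
      rw [dif_pos hu]
      constructor
      · rw [Fin.lt_def]
        exact unshift_lt_of_lt_shiftc h3 h1
      · intro b hb
        apply h2
        have : (g b : ℕ) = unshift e (c:ℕ) := congrArg Fin.val hb
        rw [this, shiftc_unshift h3]
    · intro c' hcm
      simp only [Finset.mem_coe, mem_filter, mem_univ, true_and] at hcm ⊢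
      obtain ⟨h1, h2⟩ := hcm
      refine ⟨⟨?_, fun b hb => h2 b (Fin.ext (shiftc_inj e hb))⟩, shiftc_ne e _⟩
      rw [shiftc_lt_iff]
      exact h1
    · intro c hcm
      simp only [Finset.mem_coe, mem_filter, mem_univ, true_and] at hcm
      have hu : unshift e (c:ℕ) < m := by
        have := c.isLt; unfold unshift; split <;> omega
      simp only [dif_pos hu]
      apply Fin.ext
      exact shiftc_unshift hcm.2
    · intro c' _
      have hu : unshift e (shiftc e (c':ℕ)) < m := by
        rw [unshift_shiftc]; exact c'.isLt
      simp only [dif_pos hu]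
      apply Fin.ext
      simp only []
      exact unshift_shiftc e _
  rw [hA, hB]
  omega

end CPFAux
end C

section D
open Finset
namespace CPFAux

variable {m : ℕ} {g : Fin m → Fin m} {e c₀ : ℕ}

lemma Zst_ins (hc : c₀ ≤ e) (he : e ≤ Zst g) :
    Zst (ins g e c₀) = if c₀ = e then Zst g + 1 else e := by
  have hzm := Zst_le g
  have hem : e ≤ m := le_trans he hzm
  have hcm : c₀ ≤ m := le_trans hc hem
  by_cases hce : c₀ = e
  · rw [if_pos hce]
    subst hce
    conv_lhs => unfold Zst
    rw [Nat.find_eq_iff]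
    constructor
    · by_cases hzg : Zst g < m
      · right
        intro x
        rcases Fin.eq_zero_or_eq_succ x with rfl | ⟨b, rfl⟩
        · rw [ins_zero g hcm]; omega
        · rw [ins_succ]
          have hgb := (g b).isLt
          have hne := Zst_empty hzg b
          unfold shiftc; split <;> omega
      · left; omega
    · intro k hk
      rw [not_or]
      push_neg
      refine ⟨by omega, ?_⟩
      by_cases hke : k = c₀
      · exact ⟨0, by rw [ins_zero g hcm]; omega⟩
      · by_cases hkl : k < c₀
        · obtain ⟨b, hb⟩ := exists_of_lt_Zst (show k < Zst g by omega)
          exact ⟨b.succ, by rw [ins_succ]; unfold shiftc; rw [if_pos (by omega)]; exact hb⟩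
        · obtain ⟨b, hb⟩ := exists_of_lt_Zst (show k - 1 < Zst g by omega)
          exact ⟨b.succ, by rw [ins_succ]; unfold shiftc; rw [if_neg (by omega)]; omega⟩
  · rw [if_neg hce]
    have hclt : c₀ < e := lt_of_le_of_ne hc hce
    conv_lhs => unfold Zst
    rw [Nat.find_eq_iff]
    constructor
    · right
      intro x
      rcases Fin.eq_zero_or_eq_succ x with rfl | ⟨b, rfl⟩
      · rw [ins_zero g hcm]; omega
      · rw [ins_succ]; exact shiftc_ne e (g b)
    · intro k hk
      rw [not_or]
      push_neg
      refine ⟨by omega, ?_⟩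
      by_cases hke : k = c₀
      · exact ⟨0, by rw [ins_zero g hcm]; omega⟩
      · obtain ⟨b, hb⟩ := exists_of_lt_Zst (show k < Zst g by omega)
        exact ⟨b.succ, by rw [ins_succ]; unfold shiftc; rw [if_pos (by omega)]; exact hb⟩

variable {f : Fin (m+1) → Fin (m+1)}

lemma f0_le_EF (hd : domIndex f 0 < 1) : (f 0 : ℕ) ≤ EF f := by
  by_contra hlt
  push_neg at hlt
  have hEm := EF_le f
  have hmem : (⟨EF f, by omega⟩ : Fin (m+1))
      ∈ univ.filter (fun c : Fin (m+1) => c < f 0 ∧ ∀ b, f b = c → b < 0) := by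
    simp only [mem_filter, mem_univ, true_and]
    constructor
    · rw [Fin.lt_def]; exact hlt
    · intro b hb
      exfalso
      rcases Fin.eq_zero_or_eq_succ b with rfl | ⟨b', rfl⟩
      · have := congrArg Fin.val hb
        simp only [Fin.val_mk] at this
        omega
      · exact EF_spec f b' (congrArg Fin.val hb)
  have : 0 < domIndex f 0 := by
    unfold domIndex
    exact card_pos.mpr ⟨_, hmem⟩
  omega

lemma EF_le_Zst_shr (f : Fin (m+1) → Fin (m+1)) : EF f ≤ Zst (shr f) := by
  apply le_Zst _ (EF_le f)
  intro c hcl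
  obtain ⟨a, ha⟩ := exists_of_lt_EF hcl
  refine ⟨a, ?_⟩
  rw [shr_val, ha]
  unfold unshift
  rw [if_pos hcl]

lemma shr_parking (hf : IsParking (m+1) f) (hc0 : (f 0 : ℕ) ≤ EF f) :
    IsParking m (shr f) := by
  intro i him
  have hEm := EF_le f
  by_cases hie : i ≤ EF f
  · have hfil : (univ.filter fun a : Fin m => ((shr f a : ℕ)) < i)
        = (univ.filter fun a : Fin m => (f a.succ : ℕ) < i) := by
      apply filter_congr
      intro b _
      rw [shr_val]
      have h1 := EF_spec f b
      have h2 := (f b.succ).isLt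
      unfold unshift; split <;> omega
    rw [hfil]
    have hsub : range i ⊆ (univ.filter fun a : Fin m => (f a.succ : ℕ) < i).image
        (fun a => (f a.succ : ℕ)) := by
      intro c hcr
      rw [mem_range] at hcr
      obtain ⟨a, ha⟩ := exists_of_lt_EF (lt_of_lt_of_le hcr hie)
      rw [mem_image]
      exact ⟨a, mem_filter.mpr ⟨mem_univ _, by omega⟩, ha⟩
    calc i = (range i).card := (card_range i).symm
    _ ≤ _ := card_le_card hsub
    _ ≤ _ := card_image_le
  · push_neg at hie
    have hfil : (univ.filter fun a : Fin m => ((shr f a : ℕ)) < i)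
        = (univ.filter fun a : Fin m => (f a.succ : ℕ) < i + 1) := by
      apply filter_congr
      intro b _
      rw [shr_val]
      have h1 := EF_spec f b
      have h2 := (f b.succ).isLt
      unfold unshift; split <;> omega
    rw [hfil]
    have hp := hf (i+1) (by omega)
    rw [card_filter_succ (P := fun b => (f b : ℕ) < i + 1)] at hp
    rw [if_pos (by omega)] at hp
    omega

lemma card_filter_lt_fin (a : Fin m) :
    (univ.filter fun b : Fin m => b < a).card = (a : ℕ) := by
  rw [← card_range (a : ℕ)]
  apply card_nbij' (i := fun b : Fin m => (b : ℕ))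
    (j := fun c : ℕ => if h : c < m then ⟨c, h⟩ else a)
  · intro b hb
    simp only [Finset.mem_coe, mem_filter, mem_univ, true_and, Fin.lt_def] at hb
    rw [Finset.mem_coe, mem_range]
    exact hb
  · intro c hcr
    rw [Finset.mem_coe, mem_range] at hcr
    have hcm : c < m := lt_trans hcr a.isLt
    simp only [Finset.mem_coe, mem_filter, mem_univ, true_and, dif_pos hcm, Fin.lt_def]
    exact hcr
  · intro b hb
    simp only [dif_pos b.isLt]
  · intro c hcr
    rw [Finset.mem_coe, mem_range] at hcr
    have hcm : c < m := lt_trans hcr a.isLt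
    simp only [dif_pos hcm]

lemma dom_shr (hf : IsCPF (m+1) f) (a : Fin m) :
    domIndex (shr f) a < (a : ℕ) + 1 := by
  have hd0 : domIndex f 0 < 1 := by
    have := hf.2 0
    simpa using this
  have hc0 : (f 0 : ℕ) ≤ EF f := f0_le_EF hd0
  have he := EF_le_Zst_shr f
  have hrec := dom_ins_succ (g := shr f) (e := EF f) (c₀ := (f 0 : ℕ)) hc0 he a
  rw [ins_shr f] at hrec
  have hT := hf.2 a.succ
  rw [Fin.val_succ] at hT
  by_cases hcase : EF f ≤ (shr f a : ℕ)
  · rw [if_pos hcase] at hrec; omega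
  · rw [if_neg hcase] at hrec
    push_neg at hcase
    rw [shr_val] at hcase
    have hne := EF_spec f a
    have hflt : (f a.succ : ℕ) < EF f := by
      unfold unshift at hcase; split at hcase <;> omega
    have hbound : domIndex f a.succ ≤ (a : ℕ) := by
      have hle : domIndex f a.succ ≤ (univ.filter fun b : Fin m => b < a).card := by
        unfold domIndex
        apply Finset.card_le_card_of_injOn
          (fun c : Fin (m+1) =>
            if h : ∃ b : Fin m, (f b.succ : ℕ) = (c : ℕ) then Classical.choose h else ⟨0, a.pos⟩)
        · intro c hcm
          simp only [Finset.mem_coe, mem_filter, mem_univ, true_and] at hcm ⊢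
          obtain ⟨h1, h2⟩ := hcm
          rw [Fin.lt_def] at h1
          have hex : ∃ b : Fin m, (f b.succ : ℕ) = (c : ℕ) :=
            exists_of_lt_EF (by omega)
          rw [dif_pos hex]
          have hsp := Classical.choose_spec hex
          have := h2 _ (Fin.ext hsp)
          exact Fin.succ_lt_succ_iff.mp this
        · intro c1 hc1 c2 hc2 heq
          rw [Finset.mem_coe, mem_filter] at hc1 hc2
          obtain ⟨_, hlt1, _⟩ := hc1
          obtain ⟨_, hlt2, _⟩ := hc2
          rw [Fin.lt_def] at hlt1 hlt2
          have hex1 : ∃ b : Fin m, (f b.succ : ℕ) = (c1 : ℕ) :=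
            exists_of_lt_EF (by omega)
          have hex2 : ∃ b : Fin m, (f b.succ : ℕ) = (c2 : ℕ) :=
            exists_of_lt_EF (by omega)
          simp only [dif_pos hex1, dif_pos hex2] at heq
          have s1 := Classical.choose_spec hex1
          have s2 := Classical.choose_spec hex2
          apply Fin.ext
          rw [← s1, ← s2, heq]
      rw [card_filter_lt_fin] at hle
      exact hle
    omega

lemma ins_CPF (hg : IsCPF m g) (hc : c₀ ≤ e) (he : e ≤ Zst g) :
    IsCPF (m+1) (ins g e c₀) := by
  refine ⟨ins_parking hg.1 hc he, ?_⟩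
  intro x
  rcases Fin.eq_zero_or_eq_succ x with rfl | ⟨a, rfl⟩
  · rw [dom_ins_zero hc he]; simp
  · rw [dom_ins_succ hc he a, Fin.val_succ]
    have := hg.2 a
    split <;> omega

lemma shr_CPF (hf : IsCPF (m+1) f) : IsCPF m (shr f) :=
  ⟨shr_parking hf.1 (f0_le_EF (by have := hf.2 0; simpa using this)), dom_shr hf⟩

end CPFAux
end D

section E
open Finset
namespace CPFAux

lemma Az_card (m z : ℕ) (hz : 1 ≤ z) :
    (univ.filter fun f : Fin (m+1) → Fin (m+1) => IsCPF (m+1) f ∧ Zst f = z).card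
    = z * (univ.filter fun g : Fin m → Fin m => IsCPF m g ∧ z - 1 ≤ Zst g).card := by
  have hprod : z * (univ.filter fun g : Fin m → Fin m => IsCPF m g ∧ z - 1 ≤ Zst g).card
      = ((univ.filter fun g : Fin m → Fin m => IsCPF m g ∧ z - 1 ≤ Zst g) ×ˢ range z).card := by
    rw [card_product, card_range, mul_comm]
  rw [hprod]
  apply card_nbij' (i := fun f => (shr f, (f 0 : ℕ)))
    (j := fun p => ins p.1 (if z ≤ Zst p.1 then z else p.2) p.2)
  · -- forward membership
    intro f hfA
    dsimp only
    simp only [Finset.mem_coe, mem_filter, mem_univ, true_and] at hfA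
    obtain ⟨hf, hZf⟩ := hfA
    have hd0 : domIndex f 0 < 1 := by simpa using hf.2 0
    have hc0 : (f 0 : ℕ) ≤ EF f := f0_le_EF hd0
    have he := EF_le_Zst_shr f
    have hg := shr_CPF hf
    have hZi : Zst f = if (f 0 : ℕ) = EF f then Zst (shr f) + 1 else EF f := by
      conv_lhs => rw [← ins_shr f]
      exact Zst_ins hc0 he
    simp only [Finset.mem_coe, mem_product, mem_filter, mem_range, mem_univ, true_and]
    by_cases hce : (f 0 : ℕ) = EF f
    · rw [if_pos hce] at hZi
      exact ⟨⟨hg, by omega⟩, by omega⟩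
    · rw [if_neg hce] at hZi
      have : (f 0 : ℕ) < EF f := lt_of_le_of_ne hc0 hce
      exact ⟨⟨hg, by omega⟩, by omega⟩
  · -- backward membership
    rintro ⟨g, j⟩ hp
    dsimp only
    simp only [Finset.mem_coe, mem_product, mem_filter, mem_range, mem_univ, true_and] at hp
    obtain ⟨⟨hg, hzg⟩, hj⟩ := hp
    set e := if z ≤ Zst g then z else j with hedef
    have hce' : j ≤ e := by rw [hedef]; split <;> omega
    have he' : e ≤ Zst g := by rw [hedef]; split <;> omega
    simp only [Finset.mem_coe, mem_filter, mem_univ, true_and]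
    refine ⟨ins_CPF hg hce' he', ?_⟩
    rw [Zst_ins hce' he']
    by_cases hcase : z ≤ Zst g
    · rw [hedef, if_pos hcase] at *
      rw [if_neg (by omega)]
    · rw [hedef, if_neg hcase] at *
      rw [if_pos rfl]
      omega
  · -- left inverse
    intro f hfA
    dsimp only
    simp only [Finset.mem_coe, mem_filter, mem_univ, true_and] at hfA
    obtain ⟨hf, hZf⟩ := hfA
    have hd0 : domIndex f 0 < 1 := by simpa using hf.2 0
    have hc0 : (f 0 : ℕ) ≤ EF f := f0_le_EF hd0
    have he := EF_le_Zst_shr f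
    have hZi : Zst f = if (f 0 : ℕ) = EF f then Zst (shr f) + 1 else EF f := by
      conv_lhs => rw [← ins_shr f]
      exact Zst_ins hc0 he
    have hee : (if z ≤ Zst (shr f) then z else (f 0 : ℕ)) = EF f := by
      by_cases hce : (f 0 : ℕ) = EF f
      · rw [if_pos hce] at hZi
        rw [if_neg (by omega)]
        omega
      · rw [if_neg hce] at hZi
        rw [if_pos (by omega)]
        omega
    show ins (shr f) (if z ≤ Zst (shr f) then z else (f 0 : ℕ)) (f 0 : ℕ) = f
    rw [hee]
    exact ins_shr f
  · -- right inverse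
    rintro ⟨g, j⟩ hp
    dsimp only
    simp only [Finset.mem_coe, mem_product, mem_filter, mem_range, mem_univ, true_and] at hp
    obtain ⟨⟨hg, hzg⟩, hj⟩ := hp
    set e := if z ≤ Zst g then z else j with hedef
    have hce' : j ≤ e := by rw [hedef]; split <;> omega
    have he' : e ≤ Zst g := by rw [hedef]; split <;> omega
    have hjm : j ≤ m := le_trans hce' (le_trans he' (Zst_le g))
    obtain ⟨hEF, hshr⟩ := shr_ins hce' he'
    show (shr (ins g e j), ((ins g e j) 0 : ℕ)) = (g, j)
    rw [hshr, ins_zero g hjm]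

end CPFAux
end E

section F
open Finset Nat
namespace CPFAux

lemma tail_form (m : ℕ) (hm : 1 ≤ m)
    (IH : ∀ z, 1 ≤ z → z ≤ m →
      (univ.filter fun f : Fin m → Fin m => IsCPF m f ∧ Zst f = z).card
        * ((m-z).factorial * 2^(m-z)) = z * (2*m-1-z).factorial) :
    ∀ w, 1 ≤ w → w ≤ m →
      (univ.filter fun f : Fin m → Fin m => IsCPF m f ∧ w ≤ Zst f).card
        * ((m-w).factorial * 2^(m-w)) = (2*m-w).factorial := by
  suffices H : ∀ k w, 1 ≤ w → w ≤ m → m - w = k →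
      (univ.filter fun f : Fin m → Fin m => IsCPF m f ∧ w ≤ Zst f).card
        * ((m-w).factorial * 2^(m-w)) = (2*m-w).factorial by
    intro w h1 h2
    exact H (m-w) w h1 h2 rfl
  intro k
  induction k with
  | zero =>
    intro w h1 h2 hk
    have hw : w = m := by omega
    subst hw
    have hfil : (univ.filter fun f : Fin w → Fin w => IsCPF w f ∧ w ≤ Zst f)
        = (univ.filter fun f : Fin w → Fin w => IsCPF w f ∧ Zst f = w) := by
      apply filter_congr
      intro f _
      have := Zst_le f
      constructor
      · rintro ⟨h, h'⟩; exact ⟨h, by omega⟩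
      · rintro ⟨h, h'⟩; exact ⟨h, by omega⟩
    rw [hfil]
    have := IH w hm le_rfl
    obtain ⟨m', rfl⟩ : ∃ m', w = m' + 1 := ⟨w - 1, by omega⟩
    have e1 : 2 * (m'+1) - 1 - (m'+1) = m' := by omega
    have e2 : 2 * (m'+1) - (m'+1) = m' + 1 := by omega
    rw [e1] at this
    rw [e2, Nat.sub_self] at *
    rw [this, Nat.factorial_succ]
  | succ k ihk =>
    intro w h1 h2 hk
    have hsplit : (univ.filter fun f : Fin m → Fin m => IsCPF m f ∧ w ≤ Zst f)
        = (univ.filter fun f : Fin m → Fin m => IsCPF m f ∧ w + 1 ≤ Zst f)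
          ∪ (univ.filter fun f : Fin m → Fin m => IsCPF m f ∧ Zst f = w) := by
      ext f
      simp only [mem_filter, mem_univ, true_and, mem_union]
      constructor
      · rintro ⟨h, h'⟩
        by_cases hzw : Zst f = w
        · exact Or.inr ⟨h, hzw⟩
        · exact Or.inl ⟨h, by omega⟩
      · rintro (⟨h, h'⟩ | ⟨h, h'⟩) <;> exact ⟨h, by omega⟩
    have hdisj : Disjoint
        (univ.filter fun f : Fin m → Fin m => IsCPF m f ∧ w + 1 ≤ Zst f)
        (univ.filter fun f : Fin m → Fin m => IsCPF m f ∧ Zst f = w) := by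
      rw [Finset.disjoint_left]
      intro f hf1 hf2
      simp only [mem_filter, mem_univ, true_and] at hf1 hf2
      omega
    rw [hsplit, card_union_of_disjoint hdisj]
    have hB1 := ihk (w+1) (by omega) (by omega) (by omega)
    have hA := IH w h1 h2
    obtain ⟨d, rfl⟩ : ∃ d, m = w + d + 1 := ⟨m - w - 1, by omega⟩
    have e1 : w + d + 1 - w = d + 1 := by omega
    have e2 : w + d + 1 - (w + 1) = d := by omega
    have e3 : 2 * (w + d + 1) - w = w + 2*d + 2 := by omega
    have e4 : 2 * (w + d + 1) - (w + 1) = w + 2*d + 1 := by omega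
    have e5 : 2 * (w + d + 1) - 1 - w = w + 2*d + 1 := by omega
    rw [e2, e4] at hB1
    rw [e1, e5] at hA
    rw [e1, e3]
    have e6 : (w + 2*d + 2).factorial = (w + 2*d + 2) * (w + 2*d + 1).factorial := by
      rw [show w + 2*d + 2 = (w + 2*d + 1) + 1 by omega, Nat.factorial_succ]
    calc ((univ.filter fun f : Fin (w+d+1) → Fin (w+d+1) => IsCPF (w+d+1) f ∧ w + 1 ≤ Zst f).card
          + (univ.filter fun f : Fin (w+d+1) → Fin (w+d+1) => IsCPF (w+d+1) f ∧ Zst f = w).card)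
          * ((d+1).factorial * 2^(d+1))
        = (univ.filter fun f : Fin (w+d+1) → Fin (w+d+1) => IsCPF (w+d+1) f ∧ w + 1 ≤ Zst f).card
            * (d.factorial * 2^d) * (2*(d+1))
          + (univ.filter fun f : Fin (w+d+1) → Fin (w+d+1) => IsCPF (w+d+1) f ∧ Zst f = w).card
            * ((d+1).factorial * 2^(d+1)) := by
          rw [Nat.factorial_succ, pow_succ]; ring
      _ = (w + 2*d + 1).factorial * (2*(d+1)) + w * (w + 2*d + 1).factorial := by
          rw [hB1, hA]
      _ = (w + 2*d + 2) * (w + 2*d + 1).factorial := by ring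
      _ = (w + 2*d + 2).factorial := e6.symm

lemma az_one_card :
    (univ.filter fun f : Fin 1 → Fin 1 => IsCPF 1 f ∧ Zst f = 1).card = 1 := by
  have hsing : (univ.filter fun f : Fin 1 → Fin 1 => IsCPF 1 f ∧ Zst f = 1)
      = {fun _ => 0} := by
    ext f
    simp only [mem_filter, mem_univ, true_and, mem_singleton]
    constructor
    · intro _
      funext x
      exact Subsingleton.elim _ _
    · rintro rfl
      refine ⟨⟨?_, ?_⟩, ?_⟩
      · intro i hi
        interval_cases i
        · simp
        · simp
      · intro a
        have : domIndex (fun _ : Fin 1 => (0 : Fin 1)) a = 0 := by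
          unfold domIndex
          rw [Finset.card_eq_zero, Finset.eq_empty_iff_forall_notMem]
          intro c hc
          simp only [mem_filter, mem_univ, true_and] at hc
          exact absurd hc.1 (by simp [Fin.lt_def, Fin.val_eq_zero])
        omega
      · have h1 : (1 : ℕ) ≤ Zst (fun _ : Fin 1 => (0 : Fin 1)) := by
          apply le_Zst _ le_rfl
          intro c hc
          interval_cases c
          exact ⟨0, rfl⟩
        have h2 := Zst_le (fun _ : Fin 1 => (0 : Fin 1))
        omega
  rw [hsing, card_singleton]

lemma closed_form : ∀ n, ∀ z, 1 ≤ z → z ≤ n →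
    (univ.filter fun f : Fin n → Fin n => IsCPF n f ∧ Zst f = z).card
      * ((n-z).factorial * 2^(n-z)) = z * (2*n-1-z).factorial := by
  intro n
  induction n with
  | zero => intro z h1 h2; omega
  | succ m ihm =>
    intro z hz1 hz2
    by_cases hm : m = 0
    · subst hm
      have hz : z = 1 := by omega
      subst hz
      rw [az_one_card]
      simp [Nat.factorial]
    · have hm1 : 1 ≤ m := by omega
      rw [Az_card m z hz1]
      by_cases hz1' : z = 1
      · subst hz1'
        have hfil : (univ.filter fun g : Fin m → Fin m => IsCPF m g ∧ 1 - 1 ≤ Zst g)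
            = (univ.filter fun g : Fin m → Fin m => IsCPF m g ∧ 1 ≤ Zst g) := by
          apply filter_congr
          intro g _
          constructor
          · rintro ⟨h, -⟩; exact ⟨h, one_le_Zst h.1 hm1⟩
          · rintro ⟨h, -⟩; exact ⟨h, by omega⟩
        rw [hfil]
        have htail := tail_form m hm1 ihm 1 le_rfl hm1
        obtain ⟨m', rfl⟩ : ∃ m', m = m' + 1 := ⟨m - 1, by omega⟩
        have e1 : m' + 1 - 1 = m' := by omega
        have e2 : 2 * (m' + 1) - 1 = 2 * m' + 1 := by omega
        have e3 : m' + 1 + 1 - 1 = m' + 1 := by omega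
        have e4 : 2 * (m' + 1 + 1) - 1 - 1 = 2 * m' + 2 := by omega
        rw [e1, e2] at htail
        rw [e3, e4]
        have e5 : (2 * m' + 2).factorial = (2 * m' + 2) * (2 * m' + 1).factorial := by
          rw [show 2 * m' + 2 = (2 * m' + 1) + 1 by omega, Nat.factorial_succ]
        calc 1 * (univ.filter fun g : Fin (m'+1) → Fin (m'+1) =>
                IsCPF (m'+1) g ∧ 1 ≤ Zst g).card * ((m'+1).factorial * 2^(m'+1))
            = (univ.filter fun g : Fin (m'+1) → Fin (m'+1) =>
                IsCPF (m'+1) g ∧ 1 ≤ Zst g).card * (m'.factorial * 2^m') * (2*(m'+1)) := by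
              rw [Nat.factorial_succ, pow_succ]; ring
          _ = (2 * m' + 1).factorial * (2*(m'+1)) := by rw [htail]
          _ = (2 * m' + 2) * (2 * m' + 1).factorial := by ring
          _ = 1 * (2 * m' + 2).factorial := by rw [e5]; ring
      · have hz2' : 2 ≤ z := by omega
        have htail := tail_form m hm1 ihm (z-1) (by omega) (by omega)
        have e1 : m + 1 - z = m - (z - 1) := by omega
        have e2 : 2 * (m + 1) - 1 - z = 2 * m - (z - 1) := by omega
        rw [e1, e2, mul_assoc, htail]

lemma main_count (n : ℕ) (hn : 1 ≤ n) :
    (univ.filter fun f : Fin n → Fin n => IsCPF n f).card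
      * ((n-1).factorial * 2^(n-1)) = (2*n-1).factorial := by
  have hfil : (univ.filter fun f : Fin n → Fin n => IsCPF n f)
      = (univ.filter fun f : Fin n → Fin n => IsCPF n f ∧ 1 ≤ Zst f) := by
    apply filter_congr
    intro f _
    exact ⟨fun h => ⟨h, one_le_Zst h.1 hn⟩, fun h => h.1⟩
  rw [hfil]
  exact tail_form n hn (fun z hz1 hz2 => closed_form n z hz1 hz2) 1 le_rfl hn

end CPFAux
end F

/-- For every n ≥ 2, |CPF(n)| = (2n-1)·|CPF(n-1)|. -/
theorem statement3 (n : ℕ) (hn : 2 ≤ n) :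
    cpfCount n = (2 * n - 1) * cpfCount (n - 1) := by
  obtain ⟨m, rfl⟩ : ∃ m, n = m + 2 := ⟨n - 2, by omega⟩
  have hc : ∀ k, cpfCount k = (univ.filter fun f : Fin k → Fin k => IsCPF k f).card := by
    intro k
    rw [cpfCount, Nat.card_eq_fintype_card, Fintype.card_subtype]
  have h1 := CPFAux.main_count (m+2) (by omega)
  have h2 := CPFAux.main_count (m+1) (by omega)
  have e0 : m + 2 - 1 = m + 1 := by omega
  have e1 : 2 * (m+2) - 1 = 2*m+1+2 := by omega
  have e2 : m + 1 - 1 = m := by omega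
  have e3 : 2 * (m+1) - 1 = 2*m+1 := by omega
  rw [e0, e1] at h1
  rw [e2, e3] at h2
  rw [e0, e1, hc (m+2), hc (m+1)]
  apply Nat.eq_of_mul_eq_mul_right
    (show 0 < (m+1).factorial * 2^(m+1) from
      Nat.mul_pos (m+1).factorial_pos (pow_pos (by omega) _))
  have f1 : (2*m+1+2).factorial = (2*m+1+2) * ((2*m+1+1) * (2*m+1).factorial) := by
    rw [Nat.factorial_succ, Nat.factorial_succ]
  calc (univ.filter fun f : Fin (m+2) → Fin (m+2) => IsCPF (m+2) f).card
        * ((m+1).factorial * 2^(m+1))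
      = (2*m+1+2).factorial := h1
    _ = (2*m+1+2) * ((2*m+1+1) * (2*m+1).factorial) := f1
    _ = (2*m+1+2) * ((2*m+1+1)
          * ((univ.filter fun f : Fin (m+1) → Fin (m+1) => IsCPF (m+1) f).card
            * (m.factorial * 2^m))) := by rw [h2]
    _ = (2*m+1+2) * (univ.filter fun f : Fin (m+1) → Fin (m+1) => IsCPF (m+1) f).card
          * (((m+1) * m.factorial) * (2^m * 2)) := by ring
    _ = (2*m+1+2) * (univ.filter fun f : Fin (m+1) → Fin (m+1) => IsCPF (m+1) f).card
          * ((m+1).factorial * 2^(m+1)) := by rw [← Nat.factorial_succ, ← pow_succ]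
end

section
/- Let n ≥ 2, let k ∈ Comp(n,n), and let 1 ≤ j < i_k. Then k is Catalan if and only if k̃_j is Catalan. (In particular, if k is Catalan then k̃_j is Catalan, and if k is not Catalan then k̃_j is not Catalan.) -/
open Finset

private lemma len_le_sum (l : List ℕ) (h : 0 ∉ l) : l.length ≤ l.sum := by
  induction l with
  | nil => simp
  | cons a t ih =>
    simp only [List.mem_cons, not_or] at h
    have := ih h.2
    have : a ≠ 0 := fun h' => h.1 h'.symm
    simp only [List.length_cons, List.sum_cons]
    omega

private lemma ne_zero_of_lt_indexOf {l : List ℕ} {i : ℕ} (h : i < l.idxOf 0)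
    (hi : i < l.length) : l[i] ≠ 0 := by
  have := List.not_of_lt_findIdx (p := (· == (0:ℕ))) (xs := l) h
  simpa using this

private lemma sum_set_nat (L : List ℕ) {q : ℕ} (hq : q < L.length) (v : ℕ) :
    (L.set q v).sum + L[q] = L.sum + v := by
  rw [List.sum_set]
  have h1 : (L.take (q+1)).sum + (L.drop (q+1)).sum = L.sum := List.sum_take_add_sum_drop L (q+1)
  have h2 : (L.take (q+1)).sum = (L.take q).sum + L[q] := List.sum_take_succ L q hq
  simp only [if_pos hq]
  omega

private lemma sum_take_set (l : List ℕ) {q : ℕ} (hq : q < l.length) (v i : ℕ) (hqi : q < i) :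
    ((l.set q v).take i).sum + l[q] = (l.take i).sum + v := by
  rw [List.take_set]
  have hq' : q < (l.take i).length := by rw [List.length_take]; omega
  have h := sum_set_nat (l.take i) hq' v
  rwa [List.getElem_take] at h

private lemma take_eraseIdx_le (l : List ℕ) {p i : ℕ} (hpl : p ≤ l.length) (hip : i ≤ p) :
    (l.eraseIdx p).take i = l.take i := by
  rw [List.eraseIdx_eq_take_drop_succ, List.take_append, List.length_take,
    Nat.min_eq_left hpl, Nat.sub_eq_zero_of_le hip, List.take_zero, List.append_nil,
    List.take_take, Nat.min_eq_left hip]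

private lemma sum_take_eraseIdx_ge (l : List ℕ) {p i : ℕ} (hp : p < l.length)
    (h0 : l[p] = 0) (hip : p ≤ i) :
    ((l.eraseIdx p).take i).sum = (l.take (i+1)).sum := by
  rw [List.eraseIdx_eq_take_drop_succ, List.take_append, List.length_take,
    Nat.min_eq_left hp.le, List.take_take, Nat.min_eq_right hip, List.sum_append]
  have h1 : (l.take (i+1)).sum
      = ((l.take (i+1)).take (p+1)).sum + ((l.take (i+1)).drop (p+1)).sum :=
    (List.sum_take_add_sum_drop _ _).symm
  rw [h1, List.take_take, Nat.min_eq_left (by omega), List.drop_take]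
  have h2 : i + 1 - (p + 1) = i - p := by omega
  rw [h2]
  have h3 : (l.take (p+1)).sum = (l.take p).sum + l[p] := List.sum_take_succ l p hp
  omega

/-- Let n ≥ 2, k ∈ Comp(n,n), and 1 ≤ j < i_k (here `j` is 1-based and
i_k = k.indexOf 0 + 1).  Then k is Catalan iff k̃_j is Catalan. -/
theorem statement4 (n : ℕ) (hn : 2 ≤ n) (k : List ℕ)
    (hlen : k.length = n) (hsum : k.sum = n)
    (j : ℕ) (hj1 : 1 ≤ j) (hj2 : j < k.idxOf 0 + 1) :
    IsCatalan n k ↔ IsCatalan (n - 1) (ktilde k (j - 1)) := by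
  set j0 := j - 1 with hj0
  set m := k.idxOf 0 with hm
  have hmn : m ≤ n := hlen ▸ List.idxOf_le_length
  have hj0m : j0 < m := by omega
  set t := k.set j0 (k.getD j0 0 - 1) with ht
  have hj0n : j0 < k.length := by omega
  have hkj0 : k.getD j0 0 = k[j0] := List.getD_eq_getElem k 0 hj0n
  have hkj0pos : k[j0] ≠ 0 := ne_zero_of_lt_indexOf (by omega) hj0n
  have htlen : t.length = n := by rw [ht, List.length_set, hlen]
  have htsum : t.sum + 1 = n := by
    have h := sum_set_nat k hj0n (k.getD j0 0 - 1)
    rw [← ht, hkj0] at h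
    omega
  have h0t : (0:ℕ) ∈ t := by
    by_contra h
    have := len_le_sum t h
    omega
  set p := t.idxOf 0 with hp
  have hpn : p < n := htlen ▸ List.idxOf_lt_length_iff.2 h0t
  have hpt : p < t.length := by omega
  have htp : t[p] = 0 := List.getElem_idxOf hpt
  have hktilde : ktilde k j0 = t.eraseIdx p := by
    rw [show ktilde k j0 = t.erase 0 from rfl]
    exact List.erase_eq_eraseIdx_of_idxOf rfl
  have hj0p : j0 ≤ p := by
    by_contra h
    push_neg at h
    have h1 : t[p]'hpt = k[p]'(by omega) := by
      simp only [ht]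
      exact List.getElem_set_ne (show j0 ≠ p by omega) _
    exact ne_zero_of_lt_indexOf (l := k) (i := p) (by omega) (by omega) (h1 ▸ htp)
  have hpm : p ≤ m := by
    by_contra h
    push_neg at h
    have hmlen : m < k.length := by omega
    have hkm : k[m] = 0 := List.getElem_idxOf hmlen
    have h1 : t[m]'(by omega) = k[m]'hmlen := by
      simp only [ht]
      exact List.getElem_set_ne (show j0 ≠ m by omega) _
    exact ne_zero_of_lt_indexOf (l := t) (i := m) (by omega) (by omega) (h1 ▸ hkm)
  have hSt : ∀ i, j0 < i → (t.take i).sum + 1 = (k.take i).sum := by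
    intro i hi
    have h := sum_take_set k hj0n (k.getD j0 0 - 1) i hi
    rw [← ht, hkj0] at h
    omega
  have hpos_t : ∀ i, i ≤ p → i ≤ (t.take i).sum := by
    intro i hi
    have h0 : (0:ℕ) ∉ t.take i := by
      intro hmem
      obtain ⟨q, hql, hq0⟩ := List.getElem_of_mem hmem
      rw [List.getElem_take] at hq0
      have hqi : q < i := by
        have := hql; rw [List.length_take] at this; omega
      exact ne_zero_of_lt_indexOf (l := t) (i := q) (by omega) (by omega) hq0
    have h1 := len_le_sum _ h0
    rw [List.length_take] at h1
    omega
  have hpos_k : ∀ i, i ≤ p → i ≤ (k.take i).sum := by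
    intro i hi
    have h0 : (0:ℕ) ∉ k.take i := by
      intro hmem
      obtain ⟨q, hql, hq0⟩ := List.getElem_of_mem hmem
      rw [List.getElem_take] at hq0
      have hqi : q < i := by
        have := hql; rw [List.length_take] at this; omega
      exact ne_zero_of_lt_indexOf (l := k) (i := q) (by omega) (by omega) hq0
    have h1 := len_le_sum _ h0
    rw [List.length_take] at h1
    omega
  constructor
  · intro hC i hi
    rw [hktilde]
    by_cases hip : i ≤ p
    · rw [take_eraseIdx_le t (by omega) hip]
      exact hpos_t i hip
    · push_neg at hip
      rw [sum_take_eraseIdx_ge t hpt htp (by omega)]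
      have h1 := hSt (i+1) (by omega)
      have h2 := hC (i+1) (by omega)
      omega
  · intro hC i hi
    by_cases hip : i ≤ p
    · exact hpos_k i hip
    · push_neg at hip
      have h1 := hSt i (by omega)
      have h2 := hC (i-1) (by omega)
      rw [hktilde, sum_take_eraseIdx_ge t hpt htp (by omega)] at h2
      have h3 : i - 1 + 1 = i := by omega
      rw [h3] at h2
      omega
end

section
/- Let n ≥ 2, let k ∈ Comp(n,n), and let 1 ≤ j < i_k. Then the number of column-restricted parking functions in CPF(n,k) in which the label 1 lies in column j equals |CPF(n−1, k̃_j)|; that is, #{f ∈ CPF(n,k) : f(1) = j} = |CPF(n−1, k̃_j)|. -/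
open Finset

namespace CPFaux

def ex (m c : ℕ) : ℕ := if c < m then c else c + 1
def sh (m c : ℕ) : ℕ := if c < m then c else c - 1

lemma ex_sh {m d : ℕ} (hd : d ≠ m) : ex m (sh m d) = d := by
  unfold ex sh; split_ifs <;> omega

lemma sh_ex (m c : ℕ) : sh m (ex m c) = c := by
  unfold ex sh; split_ifs <;> omega

lemma ex_ne (m c : ℕ) : ex m c ≠ m := by unfold ex; split_ifs <;> omega

lemma ex_lt_iff {m d : ℕ} (hd : d ≠ m) (c : ℕ) : ex m c < d ↔ c < sh m d := by
  unfold ex sh; split_ifs <;> omega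

lemma sh_lt_iff {m d : ℕ} (hd : d ≠ m) (i : ℕ) :
    sh m d < i ↔ d < (if i ≤ m then i else i + 1) := by
  unfold sh; split_ifs <;> omega

lemma ex_lt_bound {m c N : ℕ} (hm : m < N + 2) (hc : c < N + 1) : ex m c < N + 2 := by
  unfold ex; split_ifs <;> omega

lemma sh_lt_bound {m d N : ℕ} (hm : m < N + 2) (hd : d < N + 2) : sh m d < N + 1 := by
  unfold sh; split_ifs <;> omega

lemma indexOf_le_of_getElem {l : List ℕ} {i : ℕ} (hi : i < l.length) (h : l[i] = 0) :
    l.idxOf 0 ≤ i := by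
  induction l generalizing i with
  | nil => simp at hi
  | cons a t ih =>
    cases i with
    | zero => simp at h; simp [h, List.idxOf_cons_self]
    | succ i =>
      by_cases ha : a = 0
      · simp [ha, List.idxOf_cons_self]
      · rw [List.idxOf_cons_ne _ ha]
        have := ih (by simpa using hi) (by simpa using h)
        omega

lemma getElem_ne_of_lt_indexOf {l : List ℕ} {i : ℕ} (hi : i < l.length)
    (h : i < l.idxOf 0) : l[i] ≠ 0 :=
  fun hz => absurd (indexOf_le_of_getElem hi hz) (by omega)

lemma zero_mem_of_sum_lt {l : List ℕ} (h : l.sum < l.length) : 0 ∈ l := by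
  induction l with
  | nil => simp at h
  | cons a t ih =>
    by_cases ha : a = 0
    · simp [ha]
    · simp only [List.sum_cons, List.length_cons] at h
      exact List.mem_cons_of_mem _ (ih (by omega))

lemma card_filter_lt (M i : ℕ) (h : i ≤ M) :
    (univ.filter fun c : Fin M => (c : ℕ) < i).card = i := by
  induction i with
  | zero => simp
  | succ i ih =>
    have hstep : (univ.filter fun c : Fin M => (c : ℕ) < i + 1)
        = insert (⟨i, by omega⟩ : Fin M) (univ.filter fun c : Fin M => (c : ℕ) < i) := by
      ext c
      simp only [mem_filter, mem_univ, true_and, mem_insert, Fin.ext_iff]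
      omega
    rw [hstep, card_insert_of_notMem (by simp), ih (by omega)]

section Pair

variable {N m p : ℕ} (hm : m < N + 2)
variable {f : Fin (N + 2) → Fin (N + 2)} {F : Fin (N + 1) → Fin (N + 1)}
variable (hf0 : (f 0 : ℕ) = p)
variable (hFf : ∀ a : Fin (N + 1), (F a : ℕ) = sh m (f a.succ : ℕ))
variable (hfib : ∀ b, (f b : ℕ) = m → b = 0)

include hfib in
lemma hnem (a : Fin (N + 1)) : (f a.succ : ℕ) ≠ m :=
  fun h => Fin.succ_ne_zero a (hfib _ h)

include hFf hfib in
lemma K1 (a : Fin (N + 1)) (c' : Fin (N + 1)) :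
    F a = c' ↔ (f a.succ : ℕ) = ex m (c' : ℕ) := by
  constructor
  · rintro rfl
    rw [hFf, ex_sh (hnem hfib a)]
  · intro h
    apply Fin.ext
    rw [hFf, h, sh_ex]

include hf0 hFf hfib in
lemma L_fiber (c' : Fin (N + 1)) :
    (univ.filter fun b : Fin (N + 2) => (f b : ℕ) = ex m (c' : ℕ)).card
      = (if ex m (c' : ℕ) = p then 1 else 0)
        + (univ.filter fun a => F a = c').card := by
  rw [card_filter, card_filter, Fin.sum_univ_succ]
  congr 1
  · rw [hf0]; simp [eq_comm]
  · exact Finset.sum_congr rfl fun a _ => if_congr (K1 hFf hfib a c').symm rfl rfl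

include hf0 hFf hfib in
lemma L_pcount (i : ℕ) :
    (univ.filter fun b : Fin (N + 2) => (f b : ℕ) < (if i ≤ m then i else i + 1)).card
      = (if p < (if i ≤ m then i else i + 1) then 1 else 0)
        + (univ.filter fun a => (F a : ℕ) < i).card := by
  rw [card_filter, card_filter, Fin.sum_univ_succ]
  congr 1
  · rw [hf0]
  · refine Finset.sum_congr rfl fun a _ => if_congr ?_ rfl rfl
    rw [← sh_lt_iff (hnem hfib a) i, ← hFf]

include hf0 hFf hfib in
lemma L_pcount_m :
    (univ.filter fun b : Fin (N + 2) => (f b : ℕ) < m + 1).card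
      = (if p < m + 1 then 1 else 0)
        + (univ.filter fun a => (F a : ℕ) < m).card := by
  rw [card_filter, card_filter, Fin.sum_univ_succ]
  congr 1
  · rw [hf0]
  · refine Finset.sum_congr rfl fun a _ => if_congr ?_ rfl rfl
    have h1 := hnem hfib a
    rw [hFf]
    unfold sh; split_ifs <;> omega

include hm in
lemma Re (g : Fin (N + 2) → ℕ) :
    ∑ c : Fin (N + 2), g c
      = g ⟨m, hm⟩ + ∑ c' : Fin (N + 1), g ⟨ex m (c' : ℕ), ex_lt_bound hm c'.isLt⟩ := by
  classical
  have huniv : (univ : Finset (Fin (N + 2)))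
      = insert (⟨m, hm⟩ : Fin (N + 2))
          (univ.image fun c' : Fin (N + 1) => (⟨ex m (c' : ℕ), ex_lt_bound hm c'.isLt⟩ : Fin (N + 2))) := by
    ext c
    simp only [mem_univ, mem_insert, mem_image, true_iff, true_and]
    by_cases hc : (c : ℕ) = m
    · left; exact Fin.ext hc
    · right
      refine ⟨⟨sh m (c : ℕ), sh_lt_bound hm c.isLt⟩, ?_⟩
      exact Fin.ext (ex_sh hc)
  rw [huniv, Finset.sum_insert, Finset.sum_image]
  · intro a _ b _ hab
    have : ex m (a : ℕ) = ex m (b : ℕ) := congrArg Fin.val hab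
    have := congrArg (sh m) this
    rw [sh_ex, sh_ex] at this
    exact Fin.ext this
  · simp only [mem_image, not_exists]
    intro c' h
    exact ex_ne m (c' : ℕ) (congrArg Fin.val h.2)

include hf0 hFf hfib in
lemma L_fib_m :
    (univ.filter fun b : Fin (N + 2) => (f b : ℕ) = m).card = if p = m then 1 else 0 := by
  rw [card_filter, Fin.sum_univ_succ]
  have h2 : ∀ a : Fin (N + 1), (if (f a.succ : ℕ) = m then (1:ℕ) else 0) = 0 :=
    fun a => if_neg (hnem hfib a)
  rw [Finset.sum_congr rfl fun a _ => h2 a, Finset.sum_const_zero, hf0, add_zero]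

include hm hFf hfib in
lemma L_dom (a' : Fin (N + 1)) :
    domIndex f a'.succ = (if m < (f a'.succ : ℕ) then 1 else 0) + domIndex F a' := by
  unfold domIndex
  rw [card_filter, card_filter, Re hm]
  congr 1
  · refine if_congr ?_ rfl rfl
    constructor
    · exact fun h => h.1
    · intro h
      refine ⟨h, fun b hb => ?_⟩
      have : b = 0 := hfib b (congrArg Fin.val hb)
      rw [this]; exact Fin.succ_pos a'
  · refine Finset.sum_congr rfl fun c' _ => if_congr (and_congr ?_ ?_) rfl rfl
    · rw [Fin.lt_def, Fin.lt_def, hFf]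
      exact ex_lt_iff (hnem hfib a') (c' : ℕ)
    · constructor
      · intro h b' hb'
        have hb := (K1 hFf hfib b' c').mp hb'
        have := h b'.succ (Fin.ext hb)
        exact (Fin.succ_lt_succ_iff).mp this
      · intro h b hb
        induction b using Fin.cases with
        | zero => exact Fin.succ_pos a'
        | succ b' =>
          have : F b' = c' := (K1 hFf hfib b' c').mpr (congrArg Fin.val hb)
          exact Fin.succ_lt_succ_iff.mpr (h b' this)

include hm hf0 hFf hfib in
lemma parking_small (hpark : IsParking (N + 2) f) (hpm : p ≤ m)
    (H5 : ∀ c : ℕ, c < m → ∃ b : Fin (N + 2), b ≠ 0 ∧ (f b : ℕ) = c) :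
    IsParking (N + 1) F := by
  intro i hi
  by_cases him : i ≤ m
  · -- use injection from columns
    classical
    set u : Fin (N + 2) → Fin (N + 1) := fun c =>
      if h : ∃ b : Fin (N + 2), b ≠ 0 ∧ (f b : ℕ) = (c : ℕ) then
        (h.choose).pred h.choose_spec.1 else 0 with hu
    have key := Finset.card_le_card_of_injOn u
      (s := univ.filter fun c : Fin (N + 2) => (c : ℕ) < i)
      (t := univ.filter fun a : Fin (N + 1) => (F a : ℕ) < i) ?_ ?_
    · rw [card_filter_lt (N + 2) i (by omega)] at key
      exact key
    · intro c hc
      simp only [coe_filter, mem_univ, true_and, Set.mem_setOf_eq] at hc ⊢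
      have hex : ∃ b : Fin (N + 2), b ≠ 0 ∧ (f b : ℕ) = (c : ℕ) := H5 c (by omega)
      rw [hu]; simp only [hex, dif_pos]
      have hspec := hex.choose_spec
      have hsucc : (hex.choose.pred hspec.1).succ = hex.choose := Fin.succ_pred _ _
      rw [hFf, hsucc, hspec.2]
      unfold sh; split_ifs <;> omega
    · intro c₁ h₁ c₂ h₂ hc
      simp only [coe_filter, mem_univ, true_and, Set.mem_setOf_eq] at h₁ h₂
      have hex₁ : ∃ b : Fin (N + 2), b ≠ 0 ∧ (f b : ℕ) = (c₁ : ℕ) := H5 c₁ (by omega)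
      have hex₂ : ∃ b : Fin (N + 2), b ≠ 0 ∧ (f b : ℕ) = (c₂ : ℕ) := H5 c₂ (by omega)
      rw [hu] at hc
      simp only [hex₁, hex₂, dif_pos] at hc
      have h1 := hex₁.choose_spec
      have h2 := hex₂.choose_spec
      have : hex₁.choose = hex₂.choose := by
        rw [← Fin.succ_pred hex₁.choose h1.1, ← Fin.succ_pred hex₂.choose h2.1, hc]
      apply Fin.ext
      rw [← h1.2, ← h2.2, this]
  · -- i > m
    have hp := L_pcount hf0 hFf hfib i
    rw [if_neg him, if_pos (by omega)] at hp
    have := hpark (i + 1) (by omega)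
    omega

include hm hf0 hFf hfib in
lemma parking_big (hpark' : IsParking (N + 1) F) (hpm : p ≤ m) :
    IsParking (N + 2) f := by
  intro i hi
  rcases lt_trichotomy i (m + 1) with him | him | him
  · have hp := L_pcount hf0 hFf hfib i
    rw [if_pos (by omega)] at hp
    have := hpark' i (by omega)
    omega
  · subst him
    have hp := L_pcount_m hf0 hFf hfib
    rw [if_pos (by omega)] at hp
    have := hpark' m (by omega)
    omega
  · have hp := L_pcount hf0 hFf hfib (i - 1)
    rw [if_neg (by omega)] at hp
    have h2 : i - 1 + 1 = i := by omega
    rw [h2, if_pos (by omega)] at hp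
    have := hpark' (i - 1) (by omega)
    omega

include hm hf0 hfib in
lemma L_pig (a' : Fin (N + 1))
    (H5 : ∀ c : ℕ, c < m → ∃ b : Fin (N + 2), b ≠ 0 ∧ (f b : ℕ) = c)
    (hlt : (f a'.succ : ℕ) ≤ m) :
    domIndex f a'.succ ≤ (a' : ℕ) := by
  classical
  unfold domIndex
  set u : Fin (N + 2) → Fin (N + 2) := fun c =>
    if h : ∃ b : Fin (N + 2), b ≠ 0 ∧ (f b : ℕ) = (c : ℕ) then h.choose else 0 with hu
  have key := Finset.card_le_card_of_injOn u
    (s := univ.filter fun c : Fin (N + 2) => c < f a'.succ ∧ ∀ b, f b = c → b < a'.succ)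
    (t := univ.filter fun b : Fin (N + 2) => b ≠ 0 ∧ (b : ℕ) < (a' : ℕ) + 1) ?_ ?_
  · refine le_trans key (le_of_eq ?_)
    rw [card_filter, Fin.sum_univ_succ]
    simp only [ne_eq, not_true_eq_false, false_and, if_false, zero_add]
    have : ∀ b' : Fin (N + 1),
        (if b'.succ ≠ 0 ∧ (b'.succ : ℕ) < (a' : ℕ) + 1 then (1:ℕ) else 0)
          = if (b' : ℕ) < (a' : ℕ) then 1 else 0 := by
      intro b'
      refine if_congr ?_ rfl rfl
      simp [Fin.succ_ne_zero b', Fin.val_succ]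
    rw [Finset.sum_congr rfl fun b' _ => this b', ← card_filter, card_filter_lt _ _ (by omega)]
  · intro c hc
    simp only [coe_filter, mem_univ, true_and, Set.mem_setOf_eq] at hc ⊢
    have hcm : (c : ℕ) < m := by
      have := hc.1
      rw [Fin.lt_def] at this
      omega
    have hex : ∃ b : Fin (N + 2), b ≠ 0 ∧ (f b : ℕ) = (c : ℕ) := H5 c hcm
    rw [hu]; simp only [hex, dif_pos]
    have hspec := hex.choose_spec
    refine ⟨hspec.1, ?_⟩
    have := hc.2 hex.choose (Fin.ext hspec.2)
    rw [Fin.lt_def, Fin.val_succ] at this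
    omega
  · intro c₁ h₁ c₂ h₂ hc
    simp only [coe_filter, mem_univ, true_and, Set.mem_setOf_eq] at h₁ h₂
    have hcm₁ : (c₁ : ℕ) < m := by have := h₁.1; rw [Fin.lt_def] at this; omega
    have hcm₂ : (c₂ : ℕ) < m := by have := h₂.1; rw [Fin.lt_def] at this; omega
    have hex₁ : ∃ b : Fin (N + 2), b ≠ 0 ∧ (f b : ℕ) = (c₁ : ℕ) := H5 c₁ hcm₁
    have hex₂ : ∃ b : Fin (N + 2), b ≠ 0 ∧ (f b : ℕ) = (c₂ : ℕ) := H5 c₂ hcm₂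
    rw [hu] at hc
    simp only [hex₁, hex₂, dif_pos] at hc
    apply Fin.ext
    rw [← hex₁.choose_spec.2, ← hex₂.choose_spec.2, hc]

end Pair


lemma sum_set : ∀ (l : List ℕ) (i : ℕ), i < l.length → ∀ v : ℕ,
    (l.set i v).sum + l.getD i 0 = l.sum + v
  | a :: t, 0, _, v => by simp [List.sum_cons]; omega
  | a :: t, i+1, h, v => by
    simp only [List.set, List.sum_cons, List.getD_cons_succ]
    have := sum_set t i (by simpa using h) v
    omega

lemma erase_struct {l : List ℕ} (h0 : 0 ∈ l) :
    l.erase 0 = l.take (l.idxOf 0) ++ l.drop (l.idxOf 0 + 1) := by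
  have hm : l.idxOf 0 < l.length := List.idxOf_lt_length_iff.mpr h0
  have hdrop : l.drop (l.idxOf 0) = 0 :: l.drop (l.idxOf 0 + 1) := by
    rw [List.drop_eq_getElem_cons hm, List.getElem_idxOf hm]
  conv_lhs => rw [← List.take_append_drop (l.idxOf 0) l, hdrop]
  rw [List.erase_append_right, List.erase_cons_head]
  intro hmem
  rw [List.mem_take_iff_getElem] at hmem
  obtain ⟨i, hi, hget⟩ := hmem
  exact getElem_ne_of_lt_indexOf (by omega) (by omega) hget

lemma erase_getD {l : List ℕ} (h0 : 0 ∈ l) {c' : ℕ} (hc' : c' + 1 < l.length) :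
    (l.erase 0).getD c' 0 = l.getD (ex (l.idxOf 0) c') 0 := by
  have hml : l.idxOf 0 < l.length := List.idxOf_lt_length_iff.mpr h0
  have hkt := erase_struct h0
  have hlenerase : (l.erase 0).length = l.length - 1 := List.length_erase_of_mem h0
  have htake : (l.take (l.idxOf 0)).length = l.idxOf 0 := by
    rw [List.length_take]; omega
  have hexlt : ex (l.idxOf 0) c' < l.length := by unfold ex; split_ifs <;> omega
  rw [List.getD_eq_getElem _ _ (by omega), List.getD_eq_getElem _ _ hexlt]
  by_cases hcm : c' < l.idxOf 0
  · have hx : ex (l.idxOf 0) c' = c' := if_pos hcm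
    simp_rw [hx]
    rw [List.getElem_of_eq hkt (by omega)]
    rw [List.getElem_append_left (by omega)]
    exact List.getElem_take
  · have hx : ex (l.idxOf 0) c' = c' + 1 := if_neg hcm
    simp_rw [hx]
    rw [List.getElem_of_eq hkt (by omega)]
    rw [List.getElem_append_right (by omega)]
    rw [List.getElem_drop]
    congr 1
    omega

section KFacts

variable {N p : ℕ} {k : List ℕ}
variable (hlen : k.length = N + 2) (hsum : k.sum = N + 2) (hp : p < k.idxOf 0)

include hlen hp in
lemma hp_lt : p < N + 2 := lt_of_lt_of_le hp (hlen ▸ List.idxOf_le_length)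

include hlen hp in
lemma kp_pos : 1 ≤ k.getD p 0 := by
  have h1 : p < k.length := by have := hp_lt hlen hp; omega
  rw [List.getD_eq_getElem _ _ h1]
  have := getElem_ne_of_lt_indexOf h1 hp
  omega

include hlen hsum hp in
lemma zero_mem_k' : 0 ∈ k.set p (k.getD p 0 - 1) := by
  have h1 : p < k.length := by have := hp_lt hlen hp; omega
  apply zero_mem_of_sum_lt
  have h2 := sum_set k p h1 (k.getD p 0 - 1)
  have h3 := kp_pos hlen hp
  rw [List.length_set]
  omega

include hlen hsum hp in
lemma m_lt : (k.set p (k.getD p 0 - 1)).idxOf 0 < N + 2 := by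
  have := List.idxOf_lt_length_iff.mpr (zero_mem_k' hlen hsum hp)
  rwa [List.length_set, hlen] at this

include hlen hp in
lemma k'_getD (c : ℕ) (hc : c < N + 2) :
    (k.set p (k.getD p 0 - 1)).getD c 0
      = if c = p then k.getD p 0 - 1 else k.getD c 0 := by
  have hck : c < k.length := by rw [hlen]; omega
  rw [List.getD_eq_getElem _ _ (by rw [List.length_set, hlen]; omega)]
  rw [List.getElem_set]
  by_cases hcp : c = p
  · simp [hcp]
  · rw [if_neg (fun h => hcp h.symm), if_neg hcp, List.getD_eq_getElem _ _ hck]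

include hlen hsum hp in
lemma k'_at_m : (k.set p (k.getD p 0 - 1)).getD ((k.set p (k.getD p 0 - 1)).idxOf 0) 0 = 0 := by
  have h1 : (k.set p (k.getD p 0 - 1)).idxOf 0 < (k.set p (k.getD p 0 - 1)).length :=
    List.idxOf_lt_length_iff.mpr (zero_mem_k' hlen hsum hp)
  rw [List.getD_eq_getElem _ _ h1]
  exact List.getElem_idxOf h1

include hlen hsum hp in
lemma p_le_m : p ≤ (k.set p (k.getD p 0 - 1)).idxOf 0 := by
  by_contra h
  push_neg at h
  have hm := m_lt hlen hsum hp
  have h2 := k'_at_m hlen hsum hp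
  rw [k'_getD hlen hp _ (by omega), if_neg (by omega)] at h2
  have h4 : k.idxOf 0 ≤ (k.set p (k.getD p 0 - 1)).idxOf 0 :=
    indexOf_le_of_getElem (by rw [hlen]; omega)
      (by rw [← List.getD_eq_getElem _ 0 (by rw [hlen]; omega)]; exact h2)
  omega

include hlen hsum hp in
lemma ktilde_length : (ktilde k p).length = N + 1 := by
  have h0 := zero_mem_k' hlen hsum hp
  show ((k.set p (k.getD p 0 - 1)).erase 0).length = N + 1
  rw [List.length_erase_of_mem h0, List.length_set, hlen]; omega

include hlen hsum hp in
lemma ktilde_getD (c' : ℕ) (hc' : c' < N + 1) :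
    (ktilde k p).getD c' 0
      = (k.set p (k.getD p 0 - 1)).getD (ex ((k.set p (k.getD p 0 - 1)).idxOf 0) c') 0 := by
  have h0 := zero_mem_k' hlen hsum hp
  exact erase_getD h0 (by rw [List.length_set, hlen]; omega)

include hlen hsum hp in
lemma before_m (c : ℕ) (hc : c < (k.set p (k.getD p 0 - 1)).idxOf 0) :
    (k.set p (k.getD p 0 - 1)).getD c 0 ≠ 0 := by
  have hm := m_lt hlen hsum hp
  have hck : c < (k.set p (k.getD p 0 - 1)).length := by rw [List.length_set, hlen]; omega
  rw [List.getD_eq_getElem _ _ hck]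
  exact getElem_ne_of_lt_indexOf hck hc

end KFacts


lemma colHeights_eq_iff {M : ℕ} (f : Fin M → Fin M) (l : List ℕ) (hl : l.length = M) :
    colHeights f = l ↔ ∀ c : Fin M, (univ.filter fun a => f a = c).card = l.getD (c : ℕ) 0 := by
  unfold colHeights
  constructor
  · intro h c
    rw [← h, List.getD_eq_getElem _ _ (by rw [List.length_ofFn]; exact c.isLt),
      List.getElem_ofFn]
  · intro h
    apply List.ext_getElem (by rw [List.length_ofFn, hl])
    intro i h1 h2
    rw [List.getElem_ofFn]
    rw [h ⟨i, by rwa [List.length_ofFn] at h1⟩, List.getD_eq_getElem _ _ h2]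

/-- 0-based index of the column deleted by `ktilde`. -/
def m' (k : List ℕ) (p : ℕ) : ℕ := (k.set p (k.getD p 0 - 1)).idxOf 0

def Fsm (k : List ℕ) (p : ℕ) {N : ℕ} (f : Fin (N + 2) → Fin (N + 2)) :
    Fin (N + 1) → Fin (N + 1) :=
  fun a => ⟨min (sh (m' k p) (f a.succ : ℕ)) N, by omega⟩

def Gbg (k : List ℕ) (p : ℕ) {N : ℕ} (F : Fin (N + 1) → Fin (N + 1)) :
    Fin (N + 2) → Fin (N + 2) :=
  fun b => if h : (b : ℕ) = 0 then ⟨min p (N + 1), by omega⟩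
    else ⟨min (ex (m' k p) (F ⟨(b : ℕ) - 1, by omega⟩ : ℕ)) (N + 1), by omega⟩

lemma Fsm_val {k : List ℕ} {p N : ℕ} (hmlt : m' k p < N + 2)
    (f : Fin (N + 2) → Fin (N + 2)) (a : Fin (N + 1)) :
    (Fsm k p f a : ℕ) = sh (m' k p) (f a.succ : ℕ) := by
  simp only [Fsm]
  have := sh_lt_bound (N := N) hmlt (f a.succ).isLt
  omega

lemma Gbg_val0 {k : List ℕ} {p N : ℕ} (hplt : p < N + 2) (F : Fin (N + 1) → Fin (N + 1)) :
    (Gbg k p F 0 : ℕ) = p := by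
  unfold Gbg
  rw [dif_pos (by simp)]
  show min p (N + 1) = p
  omega

lemma Gbg_vals {k : List ℕ} {p N : ℕ} (hmlt : m' k p < N + 2)
    (F : Fin (N + 1) → Fin (N + 1)) (a : Fin (N + 1)) :
    (Gbg k p F a.succ : ℕ) = ex (m' k p) (F a : ℕ) := by
  have hne : (a.succ : ℕ) ≠ 0 := by simp [Fin.val_succ]
  simp only [Gbg, dif_neg hne]
  have ha : (⟨(a.succ : ℕ) - 1, by omega⟩ : Fin (N + 1)) = a := Fin.ext (by simp [Fin.val_succ])
  rw [ha]
  have := ex_lt_bound (N := N) hmlt (F a).isLt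
  omega

section Main

variable {N p : ℕ} {k : List ℕ}
variable (hlen : k.length = N + 2) (hsum : k.sum = N + 2) (hp : p < k.idxOf 0)

include hlen hsum hp in
lemma fib_lemma (f : Fin (N + 2) → Fin (N + 2)) (hh : colHeights f = k) (hf0 : (f 0 : ℕ) = p) :
    ∀ b, (f b : ℕ) = m' k p → b = 0 := by
  have hhc := (colHeights_eq_iff f k hlen).mp hh
  have hmlt : m' k p < N + 2 := m_lt hlen hsum hp
  have hkp := kp_pos hlen hp
  have hplt := hp_lt hlen hp
  have hm'd : (k.set p (k.getD p 0 - 1)).idxOf 0 = m' k p := rfl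
  have hk'm := k'_at_m hlen hsum hp
  rw [hm'd, k'_getD hlen hp _ hmlt] at hk'm
  intro b hb
  by_cases hmp : m' k p = p
  · rw [if_pos hmp] at hk'm
    have hcard : (univ.filter fun a => f a = (⟨p, hplt⟩ : Fin (N + 2))).card = k.getD p 0 :=
      hhc ⟨p, hplt⟩
    have hbm : b ∈ univ.filter fun a => f a = (⟨p, hplt⟩ : Fin (N + 2)) := by
      simp only [mem_filter, mem_univ, true_and]
      exact Fin.ext (by rw [hb, hmp])
    have h0m : (0 : Fin (N + 2)) ∈ univ.filter fun a => f a = (⟨p, hplt⟩ : Fin (N + 2)) := by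
      simp only [mem_filter, mem_univ, true_and]
      exact Fin.ext hf0
    exact Finset.card_le_one.mp (le_of_eq (by omega)) b hbm 0 h0m
  · rw [if_neg hmp] at hk'm
    exfalso
    have hcard : (univ.filter fun a => f a = (⟨m' k p, hmlt⟩ : Fin (N + 2))).card
        = k.getD (m' k p) 0 := hhc ⟨m' k p, hmlt⟩
    have hbm : b ∈ univ.filter fun a => f a = (⟨m' k p, hmlt⟩ : Fin (N + 2)) := by
      simp only [mem_filter, mem_univ, true_and]
      exact Fin.ext hb
    have := Finset.card_pos.mpr ⟨b, hbm⟩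
    omega

include hlen hsum hp in
lemma H5_lemma (f : Fin (N + 2) → Fin (N + 2)) (hh : colHeights f = k) (hf0 : (f 0 : ℕ) = p) :
    ∀ c : ℕ, c < m' k p → ∃ b : Fin (N + 2), b ≠ 0 ∧ (f b : ℕ) = c := by
  have hhc := (colHeights_eq_iff f k hlen).mp hh
  have hmlt : m' k p < N + 2 := m_lt hlen hsum hp
  have hm'd : (k.set p (k.getD p 0 - 1)).idxOf 0 = m' k p := rfl
  intro c hc
  have hcb : c < N + 2 := by omega
  have hbef := before_m hlen hsum hp c (by rw [hm'd]; omega)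
  rw [k'_getD hlen hp c hcb] at hbef
  have hcard : (univ.filter fun a => f a = (⟨c, hcb⟩ : Fin (N + 2))).card = k.getD c 0 :=
    hhc ⟨c, hcb⟩
  by_cases hcp : c = p
  · subst hcp
    rw [if_pos rfl] at hbef
    have h2 : 1 < (univ.filter fun a => f a = (⟨c, hcb⟩ : Fin (N + 2))).card := by omega
    obtain ⟨b, hbmem, hbne⟩ := Finset.exists_mem_ne h2 0
    refine ⟨b, hbne, ?_⟩
    have := (mem_filter.mp hbmem).2
    rw [this]
  · rw [if_neg hcp] at hbef
    have h2 : 0 < (univ.filter fun a => f a = (⟨c, hcb⟩ : Fin (N + 2))).card := by omega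
    obtain ⟨b, hbmem⟩ := Finset.card_pos.mp h2
    refine ⟨b, ?_, ?_⟩
    · intro hb0
      have := (mem_filter.mp hbmem).2
      rw [hb0] at this
      exact hcp (by rw [← hf0, this])
    · have := (mem_filter.mp hbmem).2
      rw [this]

include hlen hsum hp in
lemma forward (f : Fin (N + 2) → Fin (N + 2)) (hcpf : IsCPF (N + 2) f)
    (hh : colHeights f = k) (hf0 : (f 0 : ℕ) = p) :
    IsCPF (N + 1) (Fsm k p f) ∧ colHeights (Fsm k p f) = ktilde k p := by
  have hmlt : m' k p < N + 2 := m_lt hlen hsum hp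
  have hm'd : (k.set p (k.getD p 0 - 1)).idxOf 0 = m' k p := rfl
  have hpm : p ≤ m' k p := by have := p_le_m hlen hsum hp; omega
  have hFf : ∀ a : Fin (N + 1), (Fsm k p f a : ℕ) = sh (m' k p) (f a.succ : ℕ) :=
    Fsm_val hmlt f
  have hfib := fib_lemma hlen hsum hp f hh hf0
  have H5 := H5_lemma hlen hsum hp f hh hf0
  refine ⟨⟨parking_small hmlt hf0 hFf hfib hcpf.1 hpm H5, ?_⟩, ?_⟩
  · intro a'
    have hdom := hcpf.2 a'.succ
    rw [Fin.val_succ] at hdom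
    have hL := L_dom hmlt hFf hfib a'
    by_cases hcase : m' k p < (f a'.succ : ℕ)
    · rw [if_pos hcase] at hL; omega
    · rw [if_neg hcase] at hL
      have := L_pig hmlt hf0 hfib a' H5 (by omega)
      omega
  · rw [colHeights_eq_iff _ _ (ktilde_length hlen hsum hp)]
    intro c'
    have hfibr := L_fiber hf0 hFf hfib c'
    have hktg := ktilde_getD hlen hsum hp (c' : ℕ) c'.isLt
    rw [hm'd] at hktg
    have hexlt : ex (m' k p) (c' : ℕ) < N + 2 := ex_lt_bound hmlt c'.isLt
    have hk'g := k'_getD hlen hp (ex (m' k p) (c' : ℕ)) hexlt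
    have hval : (univ.filter fun b : Fin (N + 2) => (f b : ℕ) = ex (m' k p) (c' : ℕ))
        = univ.filter fun b => f b = ⟨ex (m' k p) (c' : ℕ), hexlt⟩ := by
      apply filter_congr
      intro b _
      simp [Fin.ext_iff]
    have hhc : (univ.filter fun b => f b = (⟨ex (m' k p) (c' : ℕ), hexlt⟩ : Fin (N + 2))).card
        = k.getD (ex (m' k p) (c' : ℕ)) 0 :=
      (colHeights_eq_iff f k hlen).mp hh ⟨ex (m' k p) (c' : ℕ), hexlt⟩
    rw [hval, hhc] at hfibr
    rw [hktg, hk'g]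
    have hkp := kp_pos hlen hp
    by_cases hcp : ex (m' k p) (c' : ℕ) = p
    · rw [if_pos hcp]
      rw [hcp] at hfibr
      rw [if_pos rfl] at hfibr
      omega
    · rw [if_neg hcp]
      rw [if_neg hcp] at hfibr
      omega

include hlen hsum hp in
lemma backward (F : Fin (N + 1) → Fin (N + 1)) (hcpf : IsCPF (N + 1) F)
    (hh : colHeights F = ktilde k p) :
    (IsCPF (N + 2) (Gbg k p F) ∧ colHeights (Gbg k p F) = k) ∧ ((Gbg k p F) 0 : ℕ) = p := by
  have hmlt : m' k p < N + 2 := m_lt hlen hsum hp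
  have hm'd : (k.set p (k.getD p 0 - 1)).idxOf 0 = m' k p := rfl
  have hpm : p ≤ m' k p := by have := p_le_m hlen hsum hp; omega
  have hplt : p < N + 2 := hp_lt hlen hp
  have hkp := kp_pos hlen hp
  set g := Gbg k p F with hg
  have hf0 : (g 0 : ℕ) = p := Gbg_val0 hplt F
  have hFf : ∀ a : Fin (N + 1), (F a : ℕ) = sh (m' k p) (g a.succ : ℕ) := by
    intro a
    rw [hg, Gbg_vals hmlt, sh_ex]
  have hfib : ∀ b, (g b : ℕ) = m' k p → b = 0 := by
    intro b
    induction b using Fin.cases with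
    | zero => intro _; rfl
    | succ a =>
      intro hb
      rw [hg, Gbg_vals hmlt] at hb
      exact absurd hb (ex_ne _ _)
  have hhF' := (colHeights_eq_iff F _ (ktilde_length hlen hsum hp)).mp hh
  have hhg : ∀ c : Fin (N + 2), (univ.filter fun b => g b = c).card = k.getD (c : ℕ) 0 := by
    intro c
    have hvalc : (univ.filter fun b => g b = c)
        = univ.filter fun b : Fin (N + 2) => (g b : ℕ) = (c : ℕ) := by
      apply filter_congr
      intro b _
      simp [Fin.ext_iff]
    by_cases hcm : (c : ℕ) = m' k p
    · have hcard := L_fib_m hf0 hFf hfib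
      rw [hvalc]
      simp_rw [hcm]
      rw [hcard]
      have hk'm := k'_at_m hlen hsum hp
      rw [hm'd, k'_getD hlen hp _ hmlt] at hk'm
      by_cases hpm' : p = m' k p
      · rw [if_pos hpm']
        rw [if_pos hpm'.symm] at hk'm
        rw [← hpm']
        omega
      · rw [if_neg hpm']
        rw [if_neg (fun h => hpm' h.symm)] at hk'm
        omega
    · have hshlt : sh (m' k p) (c : ℕ) < N + 1 := sh_lt_bound hmlt c.isLt
      have hfibr := L_fiber hf0 hFf hfib ⟨sh (m' k p) (c : ℕ), hshlt⟩
      have hex : ex (m' k p) (sh (m' k p) (c : ℕ)) = (c : ℕ) := ex_sh hcm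
      rw [show ((⟨sh (m' k p) (c : ℕ), hshlt⟩ : Fin (N + 1)) : ℕ) = sh (m' k p) (c : ℕ)
        from rfl, hex] at hfibr
      have hfibr2 : (univ.filter fun b : Fin (N + 2) => (g b : ℕ) = (c : ℕ)).card
          = (if (c : ℕ) = p then 1 else 0)
            + (univ.filter fun a => F a = ⟨sh (m' k p) (c : ℕ), hshlt⟩).card := hfibr
      have hFcard : (univ.filter fun a => F a = (⟨sh (m' k p) (c : ℕ), hshlt⟩ : Fin (N + 1))).card
          = (ktilde k p).getD (sh (m' k p) (c : ℕ)) 0 := hhF' ⟨sh (m' k p) (c : ℕ), hshlt⟩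
      have hktg := ktilde_getD hlen hsum hp (sh (m' k p) (c : ℕ)) hshlt
      rw [hm'd, hex] at hktg
      have hk'g := k'_getD hlen hp (c : ℕ) c.isLt
      rw [hktg, hk'g] at hFcard
      rw [hvalc, hfibr2, hFcard]
      by_cases hcp : (c : ℕ) = p
      · rw [if_pos hcp, if_pos hcp, hcp]
        omega
      · rw [if_neg hcp, if_neg hcp]
        omega
  have hhgL : colHeights g = k := (colHeights_eq_iff g k hlen).mpr hhg
  refine ⟨⟨⟨parking_big hmlt hf0 hFf hfib hcpf.1 hpm, ?_⟩, hhgL⟩, hf0⟩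
  intro a
  induction a using Fin.cases with
  | zero =>
    have hempty : (univ.filter fun c : Fin (N + 2) =>
        c < g 0 ∧ ∀ b, g b = c → b < 0).card = 0 := by
      rw [Finset.card_eq_zero, Finset.eq_empty_iff_forall_notMem]
      intro c hc
      rw [mem_filter] at hc
      obtain ⟨-, hlt, hall⟩ := hc
      have hcp : (c : ℕ) < p := by
        rw [Fin.lt_def, hf0] at hlt
        exact hlt
      have hkc : k.getD (c : ℕ) 0 ≠ 0 := by
        rw [List.getD_eq_getElem _ _ (by rw [hlen]; exact c.isLt)]
        exact getElem_ne_of_lt_indexOf _ (by omega)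
      have hpos : 0 < (univ.filter fun b => g b = c).card := by
        rw [hhg c]; omega
      obtain ⟨b, hb⟩ := Finset.card_pos.mp hpos
      exact absurd (hall b (mem_filter.mp hb).2) (Fin.not_lt_zero b)
    unfold domIndex
    rw [hempty]
    simp
  | succ a' =>
    have hL := L_dom hmlt hFf hfib a'
    have hd := hcpf.2 a'
    rw [Fin.val_succ]
    have hite : (if m' k p < (g a'.succ : ℕ) then 1 else 0) ≤ 1 := by split_ifs <;> omega
    omega

include hlen hsum hp in
lemma left_inverse (f : Fin (N + 2) → Fin (N + 2))
    (hh : colHeights f = k) (hf0 : (f 0 : ℕ) = p) :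
    Gbg k p (Fsm k p f) = f := by
  have hmlt : m' k p < N + 2 := m_lt hlen hsum hp
  have hplt : p < N + 2 := hp_lt hlen hp
  have hfib := fib_lemma hlen hsum hp f hh hf0
  funext b
  induction b using Fin.cases with
  | zero => exact Fin.ext (by rw [Gbg_val0 hplt, hf0])
  | succ a =>
    apply Fin.ext
    rw [Gbg_vals hmlt, Fsm_val hmlt, ex_sh (hnem hfib a)]

include hlen hsum hp in
lemma right_inverse (F : Fin (N + 1) → Fin (N + 1)) :
    Fsm k p (Gbg k p F) = F := by
  have hmlt : m' k p < N + 2 := m_lt hlen hsum hp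
  funext a
  apply Fin.ext
  rw [Fsm_val hmlt, Gbg_vals hmlt, sh_ex]

end Main

end CPFaux

/-- Let n ≥ 2, k ∈ Comp(n,n) and 1 ≤ j < i_k (j 1-based, i_k = k.indexOf 0 + 1).
Then #{f ∈ CPF(n,k) : f(1) = j} = |CPF(n-1, k̃_j)|. -/
theorem statement8 (n : ℕ) (hn : 2 ≤ n) (k : List ℕ)
    (hlen : k.length = n) (hsum : k.sum = n)
    (j : ℕ) (hj1 : 1 ≤ j) (hj2 : j < k.idxOf 0 + 1) :
    Nat.card {f : Fin n → Fin n //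
        (IsCPF n f ∧ colHeights f = k) ∧ (f ⟨0, by omega⟩ : ℕ) + 1 = j} =
      cpfCountWith (n - 1) (ktilde k (j - 1)) := by
  obtain ⟨N, rfl⟩ : ∃ N, n = N + 2 := ⟨n - 2, by omega⟩
  obtain ⟨p, rfl⟩ : ∃ p, j = p + 1 := ⟨j - 1, by omega⟩
  have hp : p < k.idxOf 0 := by omega
  have hrw : cpfCountWith (N + 2 - 1) (ktilde k (p + 1 - 1))
      = Nat.card {f : Fin (N + 1) → Fin (N + 1) //
          IsCPF (N + 1) f ∧ colHeights f = ktilde k p} := rfl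
  rw [hrw]
  refine Nat.card_congr
    { toFun := fun x => ⟨CPFaux.Fsm k p x.1, by
        have h : (x.1 0 : ℕ) + 1 = p + 1 := x.2.2
        exact CPFaux.forward hlen hsum hp x.1 x.2.1.1 x.2.1.2 (by omega)⟩
      invFun := fun y => ⟨CPFaux.Gbg k p y.1, by
        have h := CPFaux.backward hlen hsum hp y.1 y.2.1 y.2.2
        refine ⟨h.1, ?_⟩
        show (CPFaux.Gbg k p y.1 0 : ℕ) + 1 = p + 1
        rw [h.2]⟩
      left_inv := fun x => by
        apply Subtype.ext
        have h : (x.1 0 : ℕ) + 1 = p + 1 := x.2.2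
        exact CPFaux.left_inverse hlen hsum hp x.1 x.2.1.2 (by omega)
      right_inv := fun y => by
        apply Subtype.ext
        exact CPFaux.right_inverse hlen hsum hp y.1 }
end
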